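/- arXiv:2101.02541 — 6 statements merged into one kernel-verified Lean document; each statement's English description precedes it below -/
import Mathlib

section
/- For all integers i ≥ 3, j ≥ 1 and 0 ≤ k ≤ i−1, the twisted toroidal grid graph T(i,j,k) contains a Hamiltonian cycle. -/
open SimpleGraph

lemma cyclic_enum_hamiltonian {V : Type*} [DecidableEq V] [Fintype V]
    (G : SimpleGraph V) (n : ℕ) (f : ℕ → V)
    (hn : 3 ≤ n) (hcard : Fintype.card V = n)
    (hadj : ∀ t, t + 1 < n → G.Adj (f t) (f (t + 1)))
    (hwrap : G.Adj (f (n - 1)) (f 0))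
    (hinj : ∀ s t, s < n → t < n → f s = f t → s = t) :
    ∃ v, ∃ c : G.Walk v v, c.IsHamiltonianCycle := by
  -- surjectivity
  have hsurj : ∀ v : V, ∃ t, t < n ∧ f t = v := by
    intro v
    have hinj' : Function.Injective (fun t : Fin n => f t.1) := by
      intro s t h
      exact Fin.ext (hinj s t s.2 t.2 h)
    have hbij : Function.Bijective (fun t : Fin n => f t.1) := by
      rw [Fintype.bijective_iff_injective_and_card]
      exact ⟨hinj', by simp [hcard]⟩
    obtain ⟨t, ht⟩ := hbij.2 v
    exact ⟨t.1, t.2, ht⟩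
  -- build the path from f 1 to f (n-1)
  have build : ∀ m : ℕ, 1 + m < n → ∃ w : G.Walk (f 1) (f (1 + m)),
      w.support = (List.range (m + 1)).map (fun s => f (1 + s)) ∧
      w.edges = (List.range m).map (fun s => s(f (1 + s), f (1 + s + 1))) := by
    intro m
    induction m with
    | zero => intro _; exact ⟨SimpleGraph.Walk.nil, by rw [List.range_succ]; simp, by simp⟩
    | succ m ih =>
      intro hm
      obtain ⟨w, hw, he⟩ := ih (by omega)
      refine ⟨w.concat (hadj (1 + m) (by omega)), ?_, ?_⟩
      · rw [SimpleGraph.Walk.support_concat, hw,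
          List.range_succ (n := m + 1), List.map_append]
        rfl
      · rw [SimpleGraph.Walk.edges_concat, he, List.concat_eq_append,
          List.range_succ, List.map_append]
        rfl
  obtain ⟨w0, hw0, he0⟩ := build (n - 2) (by omega)
  have hn1 : 1 + (n - 2) = n - 1 := by omega
  have hfn : f (1 + (n - 2)) = f (n - 1) := by rw [hn1]
  let w : G.Walk (f 1) (f (n - 1)) := w0.copy rfl hfn
  have hw : w.support = List.map (fun s => f (1 + s)) (List.range (n - 2 + 1)) := by
    simp [w, hw0]
  have he : w.edges = List.map (fun s => s(f (1 + s), f (1 + s + 1))) (List.range (n - 2)) := by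
    simp [w, he0]
  -- close up
  let p : G.Walk (f 1) (f 0) := w.concat hwrap
  have hps : p.support = ((List.range (n - 1)).map (fun s => f (1 + s))).concat (f 0) := by
    have h21 : n - 2 + 1 = n - 1 := by omega
    simp only [p, SimpleGraph.Walk.support_concat, hw, h21, List.concat_eq_append]
  have hpe : p.edges =
      ((List.range (n - 2)).map (fun s => s(f (1 + s), f (1 + s + 1)))).concat
        s(f (n - 1), f 0) := by
    simp only [p, SimpleGraph.Walk.edges_concat, he]
  have hnodup : p.support.Nodup := by
    rw [hps, List.concat_eq_append, List.nodup_append]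
    refine ⟨?_, List.nodup_singleton _, ?_⟩
    · refine List.Nodup.map_on ?_ List.nodup_range
      intro s hs t ht hst
      simp only [List.mem_range] at hs ht
      have := hinj (1 + s) (1 + t) (by omega) (by omega) hst
      omega
    · intro a ha
      simp only [List.mem_map, List.mem_range] at ha
      obtain ⟨s, hs, rfl⟩ := ha
      simp only [List.mem_singleton]
      rintro b rfl hcontra
      have := hinj (1 + s) 0 (by omega) (by omega) hcontra
      omega
  have hpath : p.IsPath := SimpleGraph.Walk.IsPath.mk' hnodup
  have hedge : s(f 0, f 1) ∉ p.edges := by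
    rw [hpe, List.concat_eq_append]
    intro hmem
    rcases List.mem_append.1 hmem with hmem | hmem
    · simp only [List.mem_map, List.mem_range] at hmem
      obtain ⟨s, hs, hsym⟩ := hmem
      rw [Sym2.eq_iff] at hsym
      rcases hsym with ⟨h1, h2⟩ | ⟨h1, h2⟩
      · have := hinj (1 + s) 0 (by omega) (by omega) h1
        omega
      · have := hinj (1 + s + 1) 0 (by omega) (by omega) h2
        omega
    · simp only [List.mem_singleton] at hmem
      rw [Sym2.eq_iff] at hmem
      rcases hmem with ⟨h1, h2⟩ | ⟨h1, h2⟩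
      · have := hinj (n - 1) 0 (by omega) (by omega) h1.symm
        omega
      · have := hinj (n - 1) 1 (by omega) (by omega) h2.symm
        omega
  let c : G.Walk (f 0) (f 0) := SimpleGraph.Walk.cons (hadj 0 (by omega)) p
  have hcyc : c.IsCycle := by
    rw [SimpleGraph.Walk.cons_isCycle_iff]
    exact ⟨hpath, hedge⟩
  refine ⟨f 0, c, ?_⟩
  rw [SimpleGraph.Walk.isHamiltonianCycle_iff_isCycle_and_support_count_tail_eq_one]
  refine ⟨hcyc, ?_⟩
  intro a
  have htail : c.support.tail = p.support := by
    simp [c]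
  rw [htail]
  have hmem : a ∈ p.support := by
    obtain ⟨t, ht, rfl⟩ := hsurj a
    rw [hps, List.concat_eq_append, List.mem_append]
    rcases Nat.eq_zero_or_pos t with rfl | hpos
    · right; simp
    · left
      simp only [List.mem_map, List.mem_range]
      exact ⟨t - 1, by omega, by congr 1; omega⟩
  exact le_antisymm (List.nodup_iff_count_le_one.1 hnodup a) (List.count_pos_iff.2 hmem)



/-- The twisted toroidal grid `T(i,j,k)` on vertex set `Fin j × ZMod i`, with row edges
`{(b,a),(b,a+1)}`, vertical edges `{(b,a),(b+1,a)}` for `0 ≤ b < j-1`, and wrap-around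
edges `{(j-1,a),(0,a+k)}`. -/
def twistedGrid (i j k : ℕ) : SimpleGraph (Fin j × ZMod i) :=
  SimpleGraph.fromRel (fun p q =>
    (p.1 = q.1 ∧ q.2 = p.2 + 1) ∨
    ((q.1 : ℕ) = (p.1 : ℕ) + 1 ∧ q.2 = p.2) ∨
    ((p.1 : ℕ) = j - 1 ∧ (q.1 : ℕ) = 0 ∧ q.2 = p.2 + (k : ZMod i)))


section Aux
variable {i j k : ℕ}

lemma twisted_adj_row (hi : 3 ≤ i) (b : Fin j) (x : ZMod i) :
    (twistedGrid i j k).Adj (b, x) (b, x + 1) := by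
  haveI : NeZero i := ⟨by omega⟩
  haveI : Fact (1 < i) := ⟨by omega⟩
  rw [twistedGrid, SimpleGraph.fromRel_adj]
  constructor
  · intro h
    have h2 : x = x + 1 := (Prod.ext_iff.1 h).2
    exact one_ne_zero (left_eq_add.1 h2)
  · left; left
    exact ⟨rfl, rfl⟩

lemma adj_row_cast (hi : 3 ≤ i) (b b' : Fin j) (c c' : ℕ) (hb : (b : ℕ) = (b' : ℕ))
    (h : (c' : ZMod i) = (c : ZMod i) + 1) :
    (twistedGrid i j k).Adj (b, (c : ZMod i)) (b', (c' : ZMod i)) := by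
  have hb2 : b = b' := Fin.ext hb
  subst hb2
  rw [h]
  exact twisted_adj_row hi b _

lemma twisted_adj_vert (b b' : Fin j) (x : ZMod i) (h : (b' : ℕ) = (b : ℕ) + 1) :
    (twistedGrid i j k).Adj (b, x) (b', x) := by
  rw [twistedGrid, SimpleGraph.fromRel_adj]
  constructor
  · intro hc
    have : b = b' := (Prod.ext_iff.1 hc).1
    rw [this] at h
    omega
  · left; right; left
    exact ⟨h, rfl⟩

lemma adj_vert_cast (b b' : Fin j) (c c' : ℕ) (hb : (b' : ℕ) = (b : ℕ) + 1)
    (h : c = c') :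
    (twistedGrid i j k).Adj (b, (c : ZMod i)) (b', (c' : ZMod i)) := by
  subst h
  exact twisted_adj_vert b b' _ hb

lemma zmod_cast_inj (hi : 3 ≤ i) (c c' : ℕ) (hc : c < i) (hc' : c' < i)
    (h : (c : ZMod i) = (c' : ZMod i)) : c = c' := by
  haveI : NeZero i := ⟨by omega⟩
  have := congrArg ZMod.val h
  rwa [ZMod.val_natCast_of_lt hc, ZMod.val_natCast_of_lt hc'] at this

lemma zmod_last_add_one (hi : 3 ≤ i) : ((i - 1 : ℕ) : ZMod i) + 1 = ((0 : ℕ) : ZMod i) := by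
  have h1 : ((i - 1 : ℕ) : ZMod i) + 1 = ((i - 1 + 1 : ℕ) : ZMod i) := by push_cast; ring
  rw [h1, (by omega : i - 1 + 1 = i), ZMod.natCast_self]
  simp

end Aux

section Snake
variable {i j k : ℕ}

def snakeRow (i j t : ℕ) : ℕ :=
  if t < (i - 1) * j then t / (i - 1) else i * j - 1 - t

def snakeCol (i j t : ℕ) : ℕ :=
  if t < (i - 1) * j then
    (if (t / (i - 1)) % 2 = 0 then t % (i - 1) else i - 2 - t % (i - 1))
  else i - 1

lemma snake_arith (hi : 3 ≤ i) (hj : 1 ≤ j) : (i - 1) * j + j = i * j := by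
  have h1 : j ≤ i * j := Nat.le_mul_of_pos_left j (by omega)
  rw [Nat.sub_one_mul]
  omega

lemma snakeRow_lt (hi : 3 ≤ i) (hj : 1 ≤ j) (t : ℕ) : snakeRow i j t < j := by
  have hA := snake_arith hi hj
  unfold snakeRow
  split
  · next h =>
    rw [Nat.div_lt_iff_lt_mul (by omega : 0 < i - 1)]
    have hcomm : (i - 1) * j = j * (i - 1) := Nat.mul_comm _ _
    omega
  · next h => omega

def snakeF (i j : ℕ) (hi : 3 ≤ i) (hj : 1 ≤ j) (t : ℕ) : Fin j × ZMod i :=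
  (⟨snakeRow i j t, snakeRow_lt hi hj t⟩, ((snakeCol i j t : ℕ) : ZMod i))

lemma snakeCol_lt (hi : 3 ≤ i) (t : ℕ) : snakeCol i j t < i := by
  unfold snakeCol
  have := Nat.mod_lt t (show 0 < i - 1 by omega)
  split
  · split <;> omega
  · omega

lemma snakeCol_snake_le (hi : 3 ≤ i) (t : ℕ) (h : t < (i - 1) * j) :
    snakeCol i j t ≤ i - 2 := by
  unfold snakeCol
  have := Nat.mod_lt t (show 0 < i - 1 by omega)
  rw [if_pos h]
  split <;> omega

lemma snake_adj (hi : 3 ≤ i) (hj : 1 ≤ j) (t : ℕ) (ht : t + 1 < i * j) :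
    (twistedGrid i j k).Adj (snakeF i j hi hj t) (snakeF i j hi hj (t + 1)) := by
  have hA := snake_arith hi hj
  have hq : 0 < i - 1 := by omega
  unfold snakeF
  by_cases h1 : t + 1 < (i - 1) * j
  · have h0 : t < (i - 1) * j := by omega
    have hdm : (i - 1) * (t / (i - 1)) + t % (i - 1) = t := Nat.div_add_mod t (i - 1)
    set r := t / (i - 1) with hrdef
    set c := t % (i - 1) with hcdef
    have hclt : c < i - 1 := Nat.mod_lt t hq
    have ht1 : t + 1 = (i - 1) * r + (c + 1) := by omega
    by_cases hc : c + 1 < i - 1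
    · -- same row, move along the row
      have hdiv : (t + 1) / (i - 1) = r := by
        rw [ht1, Nat.mul_add_div hq, Nat.div_eq_of_lt hc]
        omega
      have hmod : (t + 1) % (i - 1) = c + 1 := by
        rw [ht1, Nat.mul_add_mod, Nat.mod_eq_of_lt hc]
      have hrow : snakeRow i j t = snakeRow i j (t + 1) := by
        unfold snakeRow; rw [if_pos h0, if_pos h1, hdiv]
      by_cases hr : r % 2 = 0
      · have hcol0 : snakeCol i j t = c := by
          unfold snakeCol; rw [if_pos h0, if_pos hr]
        have hcol1 : snakeCol i j (t + 1) = c + 1 := by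
          unfold snakeCol; rw [if_pos h1, hdiv, if_pos hr, hmod]
        exact adj_row_cast hi _ _ _ _ hrow (by rw [hcol0, hcol1]; push_cast; ring)
      · have hcol0 : snakeCol i j t = (i - 2 - (c + 1)) + 1 := by
          unfold snakeCol; rw [if_pos h0, if_neg hr]; omega
        have hcol1 : snakeCol i j (t + 1) = i - 2 - (c + 1) := by
          unfold snakeCol; rw [if_pos h1, hdiv, if_neg hr, hmod]
        exact (adj_row_cast hi _ _ _ _ hrow.symm
          (by rw [hcol0, hcol1]; push_cast; ring)).symm
    · -- move to the next row
      have hc2 : c = i - 2 := by omega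
      have hmulsucc : (i - 1) * (r + 1) = (i - 1) * r + (i - 1) := by ring
      have ht1' : t + 1 = (i - 1) * (r + 1) := by omega
      have hdiv : (t + 1) / (i - 1) = r + 1 := by
        rw [ht1', Nat.mul_div_cancel_left _ hq]
      have hmod : (t + 1) % (i - 1) = 0 := by
        rw [ht1', Nat.mul_mod_right]
      have hrow0 : snakeRow i j t = r := by unfold snakeRow; rw [if_pos h0]
      have hrow1 : snakeRow i j (t + 1) = r + 1 := by
        unfold snakeRow; rw [if_pos h1, hdiv]
      have hcols : snakeCol i j t = snakeCol i j (t + 1) := by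
        unfold snakeCol
        rw [if_pos h0, if_pos h1, hdiv, hmod, ← hrdef, ← hcdef, hc2]
        by_cases hr : r % 2 = 0
        · rw [if_pos hr, if_neg (by omega : ¬ (r + 1) % 2 = 0)]
          omega
        · rw [if_neg hr, if_pos (by omega : (r + 1) % 2 = 0)]
          omega
      exact adj_vert_cast _ _ _ _ (by omega : snakeRow i j (t + 1) = snakeRow i j t + 1) hcols
  · by_cases h2 : t < (i - 1) * j
    · -- junction from the snake to the last column
      have ht1 : t + 1 = (i - 1) * j := by omega
      have hkey : (i - 1) * (j - 1) + (i - 1) = (i - 1) * j := by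
        rw [← Nat.mul_succ]
        congr 1
        omega
      have htt : t = (i - 1) * (j - 1) + (i - 2) := by omega
      have hdiv : t / (i - 1) = j - 1 := by
        rw [htt, Nat.mul_add_div hq, Nat.div_eq_of_lt (by omega)]
        omega
      have hmod : t % (i - 1) = i - 2 := by
        rw [htt, Nat.mul_add_mod, Nat.mod_eq_of_lt (by omega)]
      have hrow0 : snakeRow i j t = j - 1 := by unfold snakeRow; rw [if_pos h2, hdiv]
      have hrow1 : snakeRow i j (t + 1) = j - 1 := by
        unfold snakeRow; rw [if_neg h1]; omega
      have hcol1 : snakeCol i j (t + 1) = i - 1 := by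
        unfold snakeCol; rw [if_neg h1]
      by_cases hr : (j - 1) % 2 = 0
      · have hcol0 : snakeCol i j t = i - 2 := by
          unfold snakeCol; rw [if_pos h2, hdiv, if_pos hr, hmod]
        refine adj_row_cast hi _ _ _ _
          (by omega : snakeRow i j t = snakeRow i j (t + 1)) ?_
        rw [hcol0, hcol1, (by omega : i - 1 = (i - 2) + 1)]
        push_cast; ring
      · have hcol0 : snakeCol i j t = 0 := by
          unfold snakeCol; rw [if_pos h2, hdiv, if_neg hr, hmod]; omega
        refine (adj_row_cast hi _ _ _ _
          (by omega : snakeRow i j (t + 1) = snakeRow i j t) ?_).symm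
        rw [hcol0, hcol1]
        exact (zmod_last_add_one hi).symm
    · -- descending the last column
      have hrow0 : snakeRow i j t = (i * j - 1 - (t + 1)) + 1 := by
        unfold snakeRow; rw [if_neg h2]; omega
      have hrow1 : snakeRow i j (t + 1) = i * j - 1 - (t + 1) := by
        unfold snakeRow; rw [if_neg h1]
      have hcol0 : snakeCol i j t = i - 1 := by unfold snakeCol; rw [if_neg h2]
      have hcol1 : snakeCol i j (t + 1) = i - 1 := by unfold snakeCol; rw [if_neg h1]
      exact (adj_vert_cast _ _ _ _
        (by omega : snakeRow i j t = snakeRow i j (t + 1) + 1)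
        (by omega : snakeCol i j (t + 1) = snakeCol i j t)).symm

lemma snake_wrap (hi : 3 ≤ i) (hj : 1 ≤ j) :
    (twistedGrid i j k).Adj (snakeF i j hi hj (i * j - 1)) (snakeF i j hi hj 0) := by
  have hA := snake_arith hi hj
  have hApos : 0 < (i - 1) * j := Nat.mul_pos (by omega) (by omega)
  unfold snakeF
  have h1 : ¬ (i * j - 1 < (i - 1) * j) := by omega
  have hrow0 : snakeRow i j (i * j - 1) = 0 := by unfold snakeRow; rw [if_neg h1]; omega
  have hcol0 : snakeCol i j (i * j - 1) = i - 1 := by unfold snakeCol; rw [if_neg h1]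
  have hrow1 : snakeRow i j 0 = 0 := by
    unfold snakeRow; rw [if_pos hApos, Nat.zero_div]
  have hcol1 : snakeCol i j 0 = 0 := by
    unfold snakeCol
    rw [if_pos hApos, Nat.zero_div, if_pos (by norm_num), Nat.zero_mod]
  refine adj_row_cast hi _ _ _ _
    (by omega : snakeRow i j (i * j - 1) = snakeRow i j 0) ?_
  rw [hcol0, hcol1]
  exact (zmod_last_add_one hi).symm

lemma snake_inj (hi : 3 ≤ i) (hj : 1 ≤ j) (s t : ℕ) (hs : s < i * j) (ht : t < i * j)
    (h : snakeF i j hi hj s = snakeF i j hi hj t) : s = t := by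
  have hA := snake_arith hi hj
  have hq : 0 < i - 1 := by omega
  rw [snakeF, snakeF, Prod.ext_iff] at h
  obtain ⟨hrow, hcol⟩ := h
  rw [Fin.mk.injEq] at hrow
  have hcol' : snakeCol i j s = snakeCol i j t :=
    zmod_cast_inj hi _ _ (snakeCol_lt hi s) (snakeCol_lt hi t) hcol
  by_cases h2s : s < (i - 1) * j <;> by_cases h2t : t < (i - 1) * j
  · -- both in the snake part
    have hds : (i - 1) * (s / (i - 1)) + s % (i - 1) = s := Nat.div_add_mod s (i - 1)
    have hdt : (i - 1) * (t / (i - 1)) + t % (i - 1) = t := Nat.div_add_mod t (i - 1)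
    have hmlts : s % (i - 1) < i - 1 := Nat.mod_lt s hq
    have hmltt : t % (i - 1) < i - 1 := Nat.mod_lt t hq
    have hdiv : s / (i - 1) = t / (i - 1) := by
      have h1 : snakeRow i j s = s / (i - 1) := by unfold snakeRow; rw [if_pos h2s]
      have h2 : snakeRow i j t = t / (i - 1) := by unfold snakeRow; rw [if_pos h2t]
      omega
    have hmod : s % (i - 1) = t % (i - 1) := by
      have h1 : snakeCol i j s =
          (if (s / (i - 1)) % 2 = 0 then s % (i - 1) else i - 2 - s % (i - 1)) := by
        unfold snakeCol; rw [if_pos h2s]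
      have h2 : snakeCol i j t =
          (if (t / (i - 1)) % 2 = 0 then t % (i - 1) else i - 2 - t % (i - 1)) := by
        unfold snakeCol; rw [if_pos h2t]
      rw [hdiv] at h1
      by_cases hr : (t / (i - 1)) % 2 = 0
      · rw [if_pos hr] at h1 h2; omega
      · rw [if_neg hr] at h1 h2; omega
    have hfg : (i - 1) * (s / (i - 1)) = (i - 1) * (t / (i - 1)) := by rw [hdiv]
    omega
  · -- s snake, t tail : columns differ
    have h1 : snakeCol i j s ≤ i - 2 := snakeCol_snake_le hi s h2s
    have h2 : snakeCol i j t = i - 1 := by unfold snakeCol; rw [if_neg h2t]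
    omega
  · have h1 : snakeCol i j t ≤ i - 2 := snakeCol_snake_le hi t h2t
    have h2 : snakeCol i j s = i - 1 := by unfold snakeCol; rw [if_neg h2s]
    omega
  · -- both in the tail
    have h1 : snakeRow i j s = i * j - 1 - s := by unfold snakeRow; rw [if_neg h2s]
    have h2 : snakeRow i j t = i * j - 1 - t := by unfold snakeRow; rw [if_neg h2t]
    omega

end Snake

/-- For all `i ≥ 3`, `j ≥ 1` and `0 ≤ k ≤ i-1`, the twisted toroidal grid `T(i,j,k)`
contains a Hamiltonian cycle. -/
theorem twistedGrid_hamiltonian (i j k : ℕ) (hi : 3 ≤ i) (hj : 1 ≤ j) (hk : k ≤ i - 1) :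
    ∃ (v : Fin j × ZMod i) (c : (twistedGrid i j k).Walk v v), c.IsHamiltonianCycle := by
  haveI : NeZero i := ⟨by omega⟩
  have hA := snake_arith hi hj
  refine cyclic_enum_hamiltonian (twistedGrid i j k) (i * j) (snakeF i j hi hj) ?_ ?_ ?_ ?_ ?_
  · have h1 : i ≤ i * j := Nat.le_mul_of_pos_right i (by omega)
    omega
  · rw [Fintype.card_prod, Fintype.card_fin, ZMod.card]
    ring
  · exact fun t ht => snake_adj hi hj t ht
  · exact snake_wrap hi hj
  · exact fun s t hs ht h => snake_inj hi hj s t hs ht h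
end

section
/- Let m ≥ 1, i ≥ 3 and 0 ≤ k ≤ i−1 be integers and set j = 4m. Let G be the simple graph on the vertex set (Fin j) × (ZMod i) whose edges are all edges of the twisted toroidal grid T(i,j,k) together with the diagonal edges {(b,a),(b+1,a+1)} for all a ∈ ZMod i and all b with 0 ≤ b ≤ j−2 and b ≡ 1, 2 or 3 (mod 4), and the wrap-around diagonal edges {(j−1,a),(0,a+k+1)} for all a ∈ ZMod i. Then G has a Hamiltonian cycle. -/
open SimpleGraph List in
lemma exists_hamCycle {V : Type*} [DecidableEq V] [Fintype V] (G : SimpleGraph V)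
    (f : ℕ → V) (N : ℕ) (hN3 : 3 ≤ N) (hcard : Fintype.card V = N)
    (hadj : ∀ n, n < N → G.Adj (f n) (f (n + 1)))
    (hcyc : f N = f 0)
    (hinj : ∀ a, a < N → ∀ b, b < N → f a = f b → a = b) :
    ∃ c : G.Walk (f 0) (f 0), c.IsHamiltonianCycle := by
  have key : ∀ n, n ≤ N → ∃ w : G.Walk (f (N - n)) (f N),
      w.support = (List.range' (N - n) (n + 1)).map f ∧
      w.edges = (List.range' (N - n) n).map (fun t => s(f t, f (t + 1))) := by
    intro n
    induction n with
    | zero =>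
      intro _
      refine ⟨Walk.nil, ?_, ?_⟩ <;> simp [List.range']
    | succ n ih =>
      intro hn
      obtain ⟨w, hs, he⟩ := ih (by omega)
      have e1 : N - (n + 1) + 1 = N - n := by omega
      have hadj' : G.Adj (f (N - (n + 1))) (f (N - n)) := by
        have := hadj (N - (n + 1)) (by omega)
        rwa [e1] at this
      refine ⟨Walk.cons hadj' w, ?_, ?_⟩
      · rw [Walk.support_cons, hs]
        conv_rhs => rw [List.range'_succ, List.map_cons]
        rw [e1]
      · rw [Walk.edges_cons, he]
        conv_rhs => rw [List.range'_succ, List.map_cons]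
        rw [e1]
  obtain ⟨w, hs, he⟩ := key N le_rfl
  have hNN : N - N = 0 := by omega
  let c : G.Walk (f 0) (f 0) := w.copy (by rw [hNN]) hcyc
  have hcs : c.support = (List.range (N + 1)).map f := by
    show (w.copy _ _).support = _
    rw [Walk.support_copy, hs, hNN, ← List.range_eq_range']
  have hce : c.edges = (List.range N).map (fun t => s(f t, f (t + 1))) := by
    show (w.copy _ _).edges = _
    rw [Walk.edges_copy, he, hNN, ← List.range_eq_range']
  have key2 : ∀ a, a ≤ N → ∀ b, b ≤ N → f a = f b →
      a = b ∨ (a = N ∧ b = 0) ∨ (a = 0 ∧ b = N) := by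
    intro a ha b hb hab
    rcases eq_or_lt_of_le ha with rfl | ha'
    · rcases eq_or_lt_of_le hb with rfl | hb'
      · left; rfl
      · right; left
        refine ⟨rfl, (hinj 0 (by omega) b hb' ?_).symm⟩
        rw [← hcyc, hab]
    · rcases eq_or_lt_of_le hb with rfl | hb'
      · right; right
        refine ⟨hinj a ha' 0 (by omega) ?_, rfl⟩
        rw [hab, hcyc]
      · left; exact hinj a ha' b hb' hab
  have htail : c.support.tail = (List.range N).map (fun t => f (t + 1)) := by
    rw [hcs, List.range_succ_eq_map, List.map_cons, List.tail_cons, List.map_map]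
    rfl
  have htail_nodup : c.support.tail.Nodup := by
    rw [htail]
    refine List.Nodup.map_on ?_ List.nodup_range
    intro x hx y hy hfe
    rw [List.mem_range] at hx hy
    rcases key2 (x+1) (by omega) (y+1) (by omega) hfe with h | h | h <;> omega
  have hlen_tail : c.support.tail.length = N := by
    rw [htail, List.length_map, List.length_range]
  have hmem : ∀ v : V, v ∈ c.support.tail := by
    have hcard' : c.support.tail.toFinset.card = Fintype.card V := by
      rw [List.toFinset_card_of_nodup htail_nodup, hlen_tail, hcard]
    have huniv : c.support.tail.toFinset = Finset.univ := Finset.eq_univ_of_card _ hcard'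
    intro v
    rw [← List.mem_toFinset, huniv]
    exact Finset.mem_univ v
  have hcount : ∀ v : V, c.support.tail.count v = 1 := by
    intro v
    refine le_antisymm (List.nodup_iff_count_le_one.1 htail_nodup v) ?_
    exact List.count_pos_iff.2 (hmem v)
  have hlensup : c.support.length = N + 1 := by
    rw [hcs, List.length_map, List.length_range]
  have hnenil : c ≠ Walk.nil := by
    intro h
    rw [h] at hlensup
    simp at hlensup
    omega
  have hedges_nodup : c.edges.Nodup := by
    rw [hce]
    refine List.Nodup.map_on ?_ List.nodup_range
    intro x hx y hy hfe
    rw [List.mem_range] at hx hy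
    rw [Sym2.mk_eq_mk_iff (p := (f x, f (x + 1))) (q := (f y, f (y + 1)))] at hfe
    rcases hfe with h | h
    · have h1 : f x = f y := (Prod.ext_iff.1 h).1
      exact hinj x hx y hy h1
    · have h1 : f x = f (y + 1) := by
        have := (Prod.ext_iff.1 h).1
        simpa using this
      have h2 : f (x + 1) = f y := by
        have := (Prod.ext_iff.1 h).2
        simpa using this
      rcases key2 x (by omega) (y+1) (by omega) h1 with e | e | e
      · rcases key2 (x+1) (by omega) y (by omega) h2 with e' | e' | e' <;> omega
      · omega
      · rcases key2 (x+1) (by omega) y (by omega) h2 with e' | e' | e' <;> omega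
  refine ⟨c, ?_⟩
  rw [Walk.isHamiltonianCycle_iff_isCycle_and_support_count_tail_eq_one]
  exact ⟨⟨⟨⟨hedges_nodup⟩, hnenil⟩, htail_nodup⟩, hcount⟩

/-- The edge graph of the doubly semi-equivelar map of type `[3⁶:3³.4²]₂` in its
`M(i,j,k)`-representation (`j = 4m`): the twisted toroidal grid together with diagonal
edges `{(b,a),(b+1,a+1)}` for rows `b ≡ 1, 2, 3 (mod 4)` and the wrap-around diagonals
`{(j-1,a),(0,a+k+1)}`, is Hamiltonian. -/
theorem dsem_3_6_3_3_4_2_2_hamiltonian (m i j k : ℕ) (hm : 1 ≤ m) (hj : j = 4 * m)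
    (hi : 3 ≤ i) (hk : k ≤ i - 1) :
    ∃ (v : Fin j × ZMod i)
      (c : (twistedGrid i j k ⊔ SimpleGraph.fromRel (fun p q : Fin j × ZMod i =>
        (((p.1 : ℕ) % 4 = 1 ∨ (p.1 : ℕ) % 4 = 2 ∨ (p.1 : ℕ) % 4 = 3) ∧
          (q.1 : ℕ) = (p.1 : ℕ) + 1 ∧ q.2 = p.2 + 1) ∨
        ((p.1 : ℕ) = j - 1 ∧ (q.1 : ℕ) = 0 ∧ q.2 = p.2 + (k : ZMod i) + 1))).Walk v v),
      c.IsHamiltonianCycle := by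
  haveI : NeZero i := ⟨by omega⟩
  have hjpos : 0 < j := by omega
  have hj4 : 4 ≤ j := by omega
  set g : ℕ := Nat.gcd k i with hgdef
  have gdvdk : g ∣ k := Nat.gcd_dvd_left k i
  have gdvdi : g ∣ i := Nat.gcd_dvd_right k i
  have gpos : 0 < g := Nat.gcd_pos_of_pos_right _ (by omega)
  obtain ⟨h, hih⟩ : ∃ h, i = g * h := ⟨i / g, (Nat.mul_div_cancel' gdvdi).symm⟩
  obtain ⟨k', hkk⟩ : ∃ k', k = g * k' := gdvdk
  have hhpos : 0 < h := by
    rcases Nat.eq_zero_or_pos h with h0 | h0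
    · rw [h0, Nat.mul_zero] at hih; omega
    · exact h0
  have hcop : Nat.Coprime k' h := by
    have hc := Nat.coprime_div_gcd_div_gcd (m := k) (n := i) gpos
    have e1 : k / Nat.gcd k i = k' := by
      rw [← hgdef, hkk, Nat.mul_div_cancel_left _ gpos]
    have e2 : i / Nat.gcd k i = h := by
      rw [← hgdef, hih, Nat.mul_div_cancel_left _ gpos]
    rwa [e1, e2] at hc
  set J : ℕ := j * g with hJdef
  have hJpos : 0 < J := by positivity
  set N : ℕ := j * i with hNdef
  have hNJh : N = J * h := by rw [hNdef, hJdef, hih]; ring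
  have hN3 : 3 ≤ N := by
    have : 4 * 3 ≤ j * i := Nat.mul_le_mul hj4 hi
    omega
  set f : ℕ → Fin j × ZMod i := fun n =>
    (⟨n % J / g % j, Nat.mod_lt _ hjpos⟩,
      ((n / J * k + (if (n % J / g) % 2 = 0 then n % J % g else g - 1 - n % J % g) : ℕ) : ZMod i))
    with hfdef
  have hfap : ∀ x : ℕ, f x =
      (⟨x % J / g % j, Nat.mod_lt _ hjpos⟩,
        ((x / J * k + (if (x % J / g) % 2 = 0 then x % J % g else g - 1 - x % J % g) : ℕ) : ZMod i)) := by
    intro x; rw [hfdef]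
  -- cardinality
  have hcard : Fintype.card (Fin j × ZMod i) = N := by
    rw [Fintype.card_prod, Fintype.card_fin, ZMod.card]
  -- closing
  have hcyc : f N = f 0 := by
    have e0 : N % J = 0 := by rw [hNJh]; exact Nat.mul_mod_right J h
    have e1 : N / J = h := by rw [hNJh, Nat.mul_div_cancel_left _ hJpos]
    rw [hfap, hfap, e0, e1]
    have hdvd : i ∣ h * k := ⟨k', by rw [hkk, hih]; ring⟩
    have hzero : ((h * k : ℕ) : ZMod i) = 0 := (ZMod.natCast_eq_zero_iff _ _).2 hdvd
    refine Prod.ext_iff.2 ⟨?_, ?_⟩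
    · apply Fin.ext
      simp
    · show ((h * k + _ : ℕ) : ZMod i) = _
      simp [hzero]
  -- component computation lemma
  have fparts : ∀ T R B U x : ℕ, x / J = T → x % J = R → R / g = B → R % g = U →
      f x = (⟨B % j, Nat.mod_lt _ hjpos⟩,
        ((T * k + (if B % 2 = 0 then U else g - 1 - U) : ℕ) : ZMod i)) := by
    intro T R B U x h1 h2 h3 h4
    rw [hfap x, h2, h3, h4, h1]
  have hJ' : J = j * g := hJdef
  -- adjacency
  have hadjlem : ∀ n, n < N → (twistedGrid i j k).Adj (f n) (f (n + 1)) := by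
    intro n hn
    have hrJ : n % J < J := Nat.mod_lt _ hJpos
    have hbj : n % J / g < j := (Nat.div_lt_iff_lt_mul gpos).2 (by omega)
    have hug : n % J % g < g := Nat.mod_lt _ gpos
    have hdm : J * (n / J) + n % J = n := Nat.div_add_mod n J
    have hdm2 : g * (n % J / g) + n % J % g = n % J := Nat.div_add_mod _ g
    have hcomm : g * j = j * g := Nat.mul_comm g j
    have hfn := fparts (n / J) (n % J) (n % J / g) (n % J % g) n rfl rfl rfl rfl
    have hone : ¬ ((1 : ℕ) : ZMod i) = ((0 : ℕ) : ZMod i) := by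
      intro hq
      have := (ZMod.natCast_eq_natCast_iff _ _ _).1 hq
      have := (Nat.modEq_iff_dvd' (by omega)).1 this.symm
      have := Nat.le_of_dvd (by omega) this
      omega
    have colne : ∀ A B : ℕ, B = A + 1 → ((A : ℕ) : ZMod i) ≠ ((B : ℕ) : ZMod i) := by
      intro A B hAB hq
      have h1 := (ZMod.natCast_eq_natCast_iff _ _ _).1 hq
      have h2 := (Nat.modEq_iff_dvd' (by omega)).1 h1
      have e : B - A = 1 := by omega
      rw [e] at h2
      have := Nat.le_of_dvd (by omega) h2
      omega
    by_cases hA : n % J % g + 1 < g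
    · -- middle of a row
      have e3 : g * (n % J / g + 1) ≤ g * j := Nat.mul_le_mul_left _ hbj
      have e4 : g * (n % J / g + 1) = g * (n % J / g) + g := by ring
      have hr1 : n % J + 1 < J := by omega
      have e2 : n + 1 = J * (n / J) + (n % J + 1) := by omega
      have e5 : n % J + 1 = g * (n % J / g) + (n % J % g + 1) := by omega
      have hmod : (n + 1) % J = n % J + 1 := by
        rw [e2, Nat.mul_add_mod, Nat.mod_eq_of_lt hr1]
      have hdiv : (n + 1) / J = n / J := by
        rw [e2, Nat.mul_add_div hJpos, Nat.div_eq_of_lt hr1, Nat.add_zero]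
      have hdiv' : (n % J + 1) / g = n % J / g := by
        rw [e5, Nat.mul_add_div gpos, Nat.div_eq_of_lt hA, Nat.add_zero]
      have hmod' : (n % J + 1) % g = n % J % g + 1 := by
        rw [e5, Nat.mul_add_mod, Nat.mod_eq_of_lt hA]
      have hfn1 := fparts (n / J) (n % J + 1) (n % J / g) (n % J % g + 1) (n + 1)
        hdiv hmod hdiv' hmod'
      rw [hfn, hfn1]
      by_cases hb2 : (n % J / g) % 2 = 0
      · simp only [if_pos hb2]
        refine (SimpleGraph.fromRel_adj _ _ _).2 ⟨?_, Or.inl (Or.inl ⟨rfl, ?_⟩)⟩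
        · intro hpq
          have h2c := congrArg Prod.snd hpq
          simp only at h2c
          exact colne _ _ (by omega) h2c
        · show ((n / J * k + (n % J % g + 1) : ℕ) : ZMod i)
            = ((n / J * k + n % J % g : ℕ) : ZMod i) + 1
          push_cast
          ring
      · simp only [if_neg hb2]
        refine (SimpleGraph.fromRel_adj _ _ _).2 ⟨?_, Or.inr (Or.inl ⟨rfl, ?_⟩)⟩
        · intro hpq
          have h2c := congrArg Prod.snd hpq
          simp only at h2c
          exact colne _ _ (by omega) h2c.symm
        · show ((n / J * k + (g - 1 - n % J % g) : ℕ) : ZMod i)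
            = ((n / J * k + (g - 1 - (n % J % g + 1)) : ℕ) : ZMod i) + 1
          have e : n / J * k + (g - 1 - n % J % g)
              = (n / J * k + (g - 1 - (n % J % g + 1))) + 1 := by omega
          rw [e]
          push_cast
          ring
    · by_cases hC : n % J + 1 < J
      · -- end of a row, vertical move
        have hu : n % J % g = g - 1 := by omega
        have e4 : g * (n % J / g + 1) = g * (n % J / g) + g := by ring
        have e5 : n % J + 1 = g * (n % J / g + 1) := by omega
        have e2 : n + 1 = J * (n / J) + (n % J + 1) := by omega
        have hmod : (n + 1) % J = n % J + 1 := by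
          rw [e2, Nat.mul_add_mod, Nat.mod_eq_of_lt hC]
        have hdiv : (n + 1) / J = n / J := by
          rw [e2, Nat.mul_add_div hJpos, Nat.div_eq_of_lt hC, Nat.add_zero]
        have hdiv' : (n % J + 1) / g = n % J / g + 1 := by
          rw [e5, Nat.mul_div_cancel_left _ gpos]
        have hmod' : (n % J + 1) % g = 0 := by
          rw [e5]; exact Nat.mul_mod_right g _
        have hb1j : n % J / g + 1 < j := by
          have h6 : g * (n % J / g + 1) < g * j := by omega
          exact Nat.lt_of_mul_lt_mul_left h6
        have hfn1 := fparts (n / J) (n % J + 1) (n % J / g + 1) 0 (n + 1)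
          hdiv hmod hdiv' hmod'
        rw [hfn, hfn1]
        have hcols : (if (n % J / g + 1) % 2 = 0 then (0:ℕ) else g - 1 - 0)
            = (if (n % J / g) % 2 = 0 then n % J % g else g - 1 - n % J % g) := by
          by_cases hb2 : (n % J / g) % 2 = 0
          · rw [if_pos hb2, if_neg (by omega), hu]
            omega
          · rw [if_neg (by omega : ¬ (n % J / g) % 2 = 0), if_pos (by omega)]
            omega
        refine (SimpleGraph.fromRel_adj _ _ _).2 ⟨?_, Or.inl (Or.inr (Or.inl ⟨?_, ?_⟩))⟩
        · intro hpq
          have h1c := congrArg (fun z => (z.1 : Fin j)) hpq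
          simp only at h1c
          have h1v := congrArg Fin.val h1c
          simp only at h1v
          rw [Nat.mod_eq_of_lt hbj, Nat.mod_eq_of_lt hb1j] at h1v
          omega
        · show (n % J / g + 1) % j = n % J / g % j + 1
          rw [Nat.mod_eq_of_lt hbj, Nat.mod_eq_of_lt hb1j]
        · rw [hcols]
      · -- end of the pass, wrap-around
        have hu : n % J % g = g - 1 := by omega
        have hrJ1 : n % J + 1 = J := by omega
        have e6 : g * (j - 1) + g = j * g := by
          have e7 : g * (j - 1) + g = g * ((j - 1) + 1) := by ring
          rw [e7]
          have : j - 1 + 1 = j := by omega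
          rw [this, Nat.mul_comm]
        have e4 : g * (n % J / g) = g * (j - 1) := by omega
        have hbval : n % J / g = j - 1 := Nat.eq_of_mul_eq_mul_left gpos e4
        have e8 : J * (n / J + 1) = J * (n / J) + J := by ring
        have e2 : n + 1 = J * (n / J + 1) := by omega
        have hmod : (n + 1) % J = 0 := by rw [e2]; exact Nat.mul_mod_right _ _
        have hdiv : (n + 1) / J = n / J + 1 := by
          rw [e2, Nat.mul_div_cancel_left _ hJpos]
        have hfn1 := fparts (n / J + 1) 0 0 0 (n + 1) hdiv hmod
          (Nat.zero_div g) (Nat.zero_mod g)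
        rw [hfn, hfn1]
        have hpar : ¬ (n % J / g) % 2 = 0 := by rw [hbval]; omega
        rw [if_neg hpar, if_pos (by norm_num)]
        have hz : g - 1 - n % J % g = 0 := by omega
        rw [hz, hbval]
        refine (SimpleGraph.fromRel_adj _ _ _).2 ⟨?_, Or.inl (Or.inr (Or.inr ⟨?_, ?_, ?_⟩))⟩
        · intro hpq
          have h1c := congrArg (fun z => (z.1 : Fin j)) hpq
          simp only at h1c
          have h1v := congrArg Fin.val h1c
          simp only at h1v
          rw [Nat.mod_eq_of_lt (by omega : j - 1 < j), Nat.zero_mod] at h1v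
          omega
        · show (j - 1) % j = j - 1
          exact Nat.mod_eq_of_lt (by omega)
        · show (0 : ℕ) % j = 0
          exact Nat.zero_mod j
        · show ((n / J + 1) * k + 0 : ℕ) = (((n / J * k + 0 : ℕ) : ZMod i) + (k : ZMod i))
          push_cast
          ring
  -- injectivity
  have tcancel : ∀ p q : ℕ, p ≤ q → q < h → p * k ≡ q * k [MOD i] → p = q := by
    intro p q hpq hq hmod
    have hd : i ∣ q * k - p * k :=
      (Nat.modEq_iff_dvd' (Nat.mul_le_mul_right k hpq)).1 hmod
    have e : q * k - p * k = g * ((q - p) * k') := by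
      rw [← Nat.sub_mul, hkk]; ring
    rw [e, hih] at hd
    have hd2 : h ∣ (q - p) * k' := (Nat.mul_dvd_mul_iff_left gpos).1 hd
    have hd3 : h ∣ q - p := (Nat.Coprime.dvd_of_dvd_mul_right hcop.symm) hd2
    have h0 : q - p = 0 ∨ h ≤ q - p := by
      rcases Nat.eq_zero_or_pos (q - p) with h0 | h0
      · exact Or.inl h0
      · exact Or.inr (Nat.le_of_dvd h0 hd3)
    omega
  have hinj : ∀ x, x < N → ∀ y, y < N → f x = f y → x = y := by
    intro x hx y hy hxy
    rw [hfap x, hfap y] at hxy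
    have hbxj : x % J / g < j :=
      (Nat.div_lt_iff_lt_mul gpos).2 (by have := Nat.mod_lt x (y := J) hJpos; omega)
    have hbyj : y % J / g < j :=
      (Nat.div_lt_iff_lt_mul gpos).2 (by have := Nat.mod_lt y (y := J) hJpos; omega)
    have hugx : x % J % g < g := Nat.mod_lt _ gpos
    have hugy : y % J % g < g := Nat.mod_lt _ gpos
    have h1 := congrArg (fun z => ((z.1 : Fin j) : ℕ)) hxy
    simp only at h1
    rw [Nat.mod_eq_of_lt hbxj, Nat.mod_eq_of_lt hbyj] at h1
    have h2 := congrArg Prod.snd hxy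
    simp only at h2
    have hmodeq := (ZMod.natCast_eq_natCast_iff _ _ _).1 h2
    -- the in-row offsets agree
    have hdgx : g ∣ x / J * k := ⟨x / J * k', by rw [hkk]; ring⟩
    have hdgy : g ∣ y / J * k := ⟨y / J * k', by rw [hkk]; ring⟩
    have hmodg := hmodeq.of_dvd gdvdi
    have hS : (if (x % J / g) % 2 = 0 then x % J % g else g - 1 - x % J % g)
        = (if (y % J / g) % 2 = 0 then y % J % g else g - 1 - y % J % g) := by
      have hsx : (if (x % J / g) % 2 = 0 then x % J % g else g - 1 - x % J % g) < g := by
        split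
        · exact hugx
        · omega
      have hsy : (if (y % J / g) % 2 = 0 then y % J % g else g - 1 - y % J % g) < g := by
        split
        · exact hugy
        · omega
      have hax : x / J * k % g = 0 := Nat.mod_eq_zero_of_dvd hdgx
      have hay : y / J * k % g = 0 := Nat.mod_eq_zero_of_dvd hdgy
      have := hmodg
      unfold Nat.ModEq at this
      rw [Nat.add_mod, Nat.add_mod (y / J * k), hax, hay] at this
      simpa [Nat.mod_eq_of_lt hsx, Nat.mod_eq_of_lt hsy] using this
    rw [hS] at hmodeq
    have hmk : x / J * k ≡ y / J * k [MOD i] := Nat.ModEq.add_right_cancel' _ hmodeq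
    have htx : x / J < h := (Nat.div_lt_iff_lt_mul hJpos).2 (by
      have e : h * J = N := by rw [hNJh]; ring
      omega)
    have hty : y / J < h := (Nat.div_lt_iff_lt_mul hJpos).2 (by
      have e : h * J = N := by rw [hNJh]; ring
      omega)
    have hT : x / J = y / J := by
      rcases le_total (x / J) (y / J) with hle | hle
      · exact tcancel _ _ hle hty hmk
      · exact (tcancel _ _ hle htx hmk.symm).symm
    have hU : x % J % g = y % J % g := by
      rw [← h1] at hS
      split_ifs at hS <;> omega
    have hR : x % J = y % J := by
      have hdx := Nat.div_add_mod (x % J) g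
      have hdy := Nat.div_add_mod (y % J) g
      rw [h1] at hdx
      omega
    have hfx := Nat.div_add_mod x J
    have hfy := Nat.div_add_mod y J
    rw [hT] at hfx
    omega
  refine ⟨f 0, ?_⟩
  exact exists_hamCycle _ f N hN3 hcard
    (fun n hn => (SimpleGraph.sup_adj _ _ _ _).2 (Or.inl (hadjlem n hn))) hcyc hinj
end

section
/- Let m ≥ 1, i ≥ 3 and 0 ≤ k ≤ i−1 be integers and set j = 3m. Let G be the simple graph on the vertex set (Fin j) × (ZMod i) whose edges are all edges of the twisted toroidal grid T(i,j,k) together with the diagonal edges {(b,a),(b+1,a+1)} for all a ∈ ZMod i and all b with 0 ≤ b ≤ j−2 and b ≡ 2 (mod 3), and the wrap-around diagonal edges {(j−1,a),(0,a+k+1)} for all a ∈ ZMod i. Then G has a Hamiltonian cycle. -/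
open SimpleGraph

namespace HamAux




/-- Walk along `g s, g (s+1), ..., g (s+c)`. -/
def fnWalk (G : SimpleGraph V) (g : ℕ → V) :
    (c s : ℕ) → (∀ t, s ≤ t → t + 1 ≤ s + c → G.Adj (g t) (g (t + 1))) →
      G.Walk (g s) (g (s + c))
  | 0, s, _ => Walk.nil
  | c + 1, s, h =>
      (Walk.cons (h s le_rfl (by omega))
        (fnWalk G g c (s + 1) (fun t ht ht2 => h t (by omega) (by omega)))).copy rfl
        (congrArg g (by omega))

lemma fnWalk_support (g : ℕ → V) : ∀ (c s : ℕ) (h),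
    (fnWalk G g c s h).support = (List.range' s (c + 1)).map g
  | 0, s, h => by simp [fnWalk]
  | c + 1, s, h => by
      simp only [fnWalk, Walk.support_copy, Walk.support_cons,
        fnWalk_support g c (s + 1)]
      simp [List.range'_succ]

theorem ham_of_fn [Fintype V] [DecidableEq V] (G : SimpleGraph V) (g : ℕ → V) (N : ℕ)
    (hN : 3 ≤ N)
    (hadj : ∀ n, n + 1 < N → G.Adj (g n) (g (n + 1)))
    (hclose : G.Adj (g (N - 1)) (g 0))
    (hinj : ∀ m n, m < N → n < N → g m = g n → m = n)
    (hsurj : ∀ v : V, ∃ n, n < N ∧ g n = v) :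
    ∃ v, ∃ c : G.Walk v v, c.IsHamiltonianCycle := by
  have h1N : 1 + (N - 2) = N - 1 := by omega
  -- the path g 1 → g 2 → ... → g (N-1)
  let p : G.Walk (g 1) (g (N - 1)) :=
    (fnWalk G g (N - 2) 1 (fun t ht ht2 => hadj t (by omega))).copy rfl
      (congrArg g (by omega))
  have hps : p.support = (List.range' 1 (N - 1)).map g := by
    have h2 : N - 2 + 1 = N - 1 := by omega
    simp only [p, Walk.support_copy, fnWalk_support, h2]
  -- close it up
  let q : G.Walk (g 1) (g 0) := p.concat hclose
  have hqs : q.support = (List.range' 1 (N - 1) ++ [0]).map g := by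
    simp [q, Walk.support_concat, hps, List.concat_eq_append]
  have hmemI : ∀ n, n < N → n ∈ List.range' 1 (N - 1) ++ [0] := by
    intro n hn
    rcases Nat.eq_zero_or_pos n with h | h
    · simp [h]
    · simp only [List.mem_append, List.mem_range'_1]
      exact Or.inl ⟨h, by omega⟩
  have hIlt : ∀ n ∈ List.range' 1 (N - 1) ++ [0], n < N := by
    intro n hn
    simp only [List.mem_append, List.mem_range'_1] at hn
    rcases hn with h | h
    · omega
    · simp at h; omega
  have hInd : (List.range' 1 (N - 1) ++ [0]).Nodup := by
    rw [List.nodup_append]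
    refine ⟨List.nodup_range', List.nodup_singleton _, ?_⟩
    intro a ha b hb
    simp only [List.mem_range'_1] at ha
    simp only [List.mem_singleton] at hb
    omega
  have hqnd : q.support.Nodup := by
    rw [hqs]
    refine List.Nodup.map_on ?_ hInd
    intro x hx y hy hxy
    exact hinj x y (hIlt x hx) (hIlt y hy) hxy
  have hg0 : g 0 ∉ p.support := by
    rw [hps]
    intro h
    obtain ⟨t, ht, hgt⟩ := List.mem_map.mp h
    simp only [List.mem_range'_1] at ht
    have := hinj t 0 (by omega) (by omega) hgt
    omega
  refine ⟨g 0, Walk.cons (hadj 0 (by omega)) q, ?_⟩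
  rw [Walk.isHamiltonianCycle_iff_isCycle_and_support_count_tail_eq_one]
  constructor
  · rw [Walk.cons_isCycle_iff]
    refine ⟨Walk.IsPath.mk' hqnd, ?_⟩
    intro hmem
    simp only [q, Walk.edges_concat, List.concat_eq_append, List.mem_append,
      List.mem_singleton] at hmem
    rcases hmem with hmem | hmem
    · exact hg0 (Walk.fst_mem_support_of_mem_edges p hmem)
    · rw [Sym2.eq_iff] at hmem
      rcases hmem with ⟨h1, h2⟩ | ⟨h1, h2⟩
      · have := hinj 0 (N - 1) (by omega) (by omega) h1
        omega
      · have := hinj 1 (N - 1) (by omega) (by omega) h2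
        omega
  · intro a
    have : (Walk.cons (hadj 0 (by omega)) q).support.tail = q.support := by
      simp
    rw [this, hqs]
    obtain ⟨n, hn, rfl⟩ := hsurj a
    have hnd : ((List.range' 1 (N - 1) ++ [0]).map g).Nodup := by
      refine List.Nodup.map_on ?_ hInd
      intro x hx y hy hxy
      exact hinj x y (hIlt x hx) (hIlt y hy) hxy
    exact List.count_eq_one_of_mem hnd (List.mem_map_of_mem (f := g) (hmemI n hn))


variable {V : Type*} {G : SimpleGraph V}

def sOff (j b : ℕ) : ℕ := (if b ≤ 2 then b else j - 1 - b) % 2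

def hamRC (j S n : ℕ) : ℕ × ℕ :=
  if n < S * j then (if (n / j) % 2 = 0 then n % j else j - 1 - n % j, n / j)
  else (j - 1 - (n - S * j) / 2,
        S + (sOff j (j - 1 - (n - S * j) / 2) + (n - S * j)) % 2)

theorem ham_aux {V : Type*} [Fintype V] [DecidableEq V] (G : SimpleGraph V)
    (i j : ℕ) (hi : 3 ≤ i) (hj : 3 ≤ j) (mk : ℕ → ℕ → V)
    (hrow : ∀ b c, b < j → c + 1 < i → G.Adj (mk b c) (mk b (c + 1)))
    (hwrap : ∀ b, b < j → G.Adj (mk b (i - 1)) (mk b 0))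
    (hvert : ∀ b c, b + 1 < j → c < i → G.Adj (mk b c) (mk (b + 1) c))
    (hdiag : ∀ c, c + 1 < i → 3 < j → G.Adj (mk 2 c) (mk 3 (c + 1)))
    (hinjm : ∀ b c b' c', b < j → c < i → b' < j → c' < i →
      mk b c = mk b' c' → b = b' ∧ c = c')
    (hsurjm : ∀ v : V, ∃ b c, b < j ∧ c < i ∧ mk b c = v) :
    ∃ v, ∃ w : G.Walk v v, w.IsHamiltonianCycle := by
  have hj0 : 0 < j := by omega
  set S : ℕ := if i % 2 = 0 then i else i - 2 with hSdef
  have hSi : S ≤ i := by simp only [hSdef]; split <;> omega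
  have hS1 : 1 ≤ S := by simp only [hSdef]; split <;> omega
  have hNS : i * j = S * j + (if i % 2 = 0 then 0 else 2 * j) := by
    by_cases h : i % 2 = 0
    · simp [hSdef, h]
    · simp only [hSdef, if_neg h]
      have h2 : 2 * j ≤ i * j := Nat.mul_le_mul_right j (by omega)
      rw [Nat.sub_mul]; omega
  -- div/mod facts
  have dmd : ∀ q r : ℕ, r < j → (q * j + r) / j = q := by
    intro q r h
    rw [Nat.add_comm, Nat.add_mul_div_right _ _ hj0, Nat.div_eq_of_lt h, Nat.zero_add]
  have dmm : ∀ q r : ℕ, r < j → (q * j + r) % j = r := by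
    intro q r h
    rw [Nat.add_comm, Nat.add_mul_mod_self_right, Nat.mod_eq_of_lt h]
  have hsnakelt : ∀ q r : ℕ, q < S → r < j → q * j + r < S * j := by
    intro q r hq hr
    calc q * j + r < (q + 1) * j := by rw [Nat.add_mul]; omega
    _ ≤ S * j := Nat.mul_le_mul_right j (by omega)
  have hR_snake : ∀ q r : ℕ, q < S → r < j →
      hamRC j S (q * j + r) = (if q % 2 = 0 then r else j - 1 - r, q) := by
    intro q r hq hr
    rw [hamRC, if_pos (hsnakelt q r hq hr), dmd q r hr, dmm q r hr]
  have hR_gad : ∀ t : ℕ, hamRC j S (S * j + t) =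
      (j - 1 - t / 2, S + (sOff j (j - 1 - t / 2) + t) % 2) := by
    intro t
    rw [hamRC, if_neg (by omega)]
    simp only [Nat.add_sub_cancel_left]
  have hsOff_le : ∀ b, sOff j b ≤ 1 := by
    intro b; simp only [sOff]; omega
  have hsOff_top : sOff j (j - 1) = 0 := by
    simp only [sOff]; split <;> omega
  have hsOff0 : sOff j 0 = 0 := by simp [sOff]
  have hsOff_step : ∀ b, 1 ≤ b → b ≤ j - 1 → ¬(b = 3 ∧ j % 2 = 0) →
      (sOff j b + 1) % 2 = sOff j (b - 1) := by
    intro b h1 h2 h3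
    simp only [sOff]
    split_ifs <;> omega
  have hsOff3 : j % 2 = 0 → 3 ≤ j - 1 → sOff j 3 = 0 ∧ sOff j 2 = 0 := by
    intro h1 h2
    constructor <;> simp only [sOff] <;> split_ifs <;> omega
  -- the indexing function
  set g : ℕ → V := fun n => mk (hamRC j S n).1 (hamRC j S n).2 with hgdef
  -- bounds on coordinates
  have hbound : ∀ n, n < i * j → (hamRC j S n).1 < j ∧ (hamRC j S n).2 < i := by
    intro n hn
    by_cases h : n < S * j
    · obtain ⟨q, r, hr, rfl⟩ : ∃ q r, r < j ∧ n = q * j + r :=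
        ⟨n / j, n % j, Nat.mod_lt _ hj0, by rw [Nat.mul_comm (n / j) j]; exact (Nat.div_add_mod n j).symm⟩
      have hq : q < S := by
        by_contra hq
        have : S * j ≤ q * j := Nat.mul_le_mul_right j (by omega)
        omega
      rw [hR_snake q r hq hr]
      constructor
      · split <;> omega
      · simpa using by omega
    · have h2 : i % 2 ≠ 0 := by
        intro h0; rw [h0, if_pos rfl] at hNS; simp only [hSdef, if_pos h0] at h; omega
      have hS2 : S = i - 2 := by simp only [hSdef]; rw [if_neg h2]
      obtain ⟨t, ht, rfl⟩ : ∃ t, t < 2 * j ∧ n = S * j + t := by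
        refine ⟨n - S * j, ?_, by omega⟩
        rw [if_neg h2] at hNS; omega
      rw [hR_gad t]
      have := hsOff_le (j - 1 - t / 2)
      constructor
      · omega
      · simp only []
        omega
  -- snake adjacency steps
  have snake_adj : ∀ n, n + 1 < S * j → G.Adj (g n) (g (n + 1)) := by
    intro n hn
    obtain ⟨q, r, hr, rfl⟩ : ∃ q r, r < j ∧ n = q * j + r :=
      ⟨n / j, n % j, Nat.mod_lt _ hj0, by rw [Nat.mul_comm (n / j) j]; exact (Nat.div_add_mod n j).symm⟩
    have hq : q < S := by
      by_contra hq
      have : S * j ≤ q * j := Nat.mul_le_mul_right j (by omega)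
      omega
    by_cases hr1 : r + 1 < j
    · simp only [hgdef]
      rw [Nat.add_assoc, hR_snake q r hq hr, hR_snake q (r + 1) hq hr1]
      by_cases hq2 : q % 2 = 0
      · simp only [if_pos hq2]
        exact hvert r q hr1 (by omega)
      · simp only [if_neg hq2]
        rw [show j - 1 - r = (j - 1 - (r + 1)) + 1 by omega]
        exact (hvert (j - 1 - (r + 1)) q (by omega) (by omega)).symm
    · have hr2 : r = j - 1 := by omega
      have hq1 : q + 1 < S := by
        by_contra h
        have h5 : S * j ≤ (q + 1) * j := Nat.mul_le_mul_right j (by omega)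
        rw [Nat.add_mul] at h5
        omega
      simp only [hgdef]
      rw [show q * j + r + 1 = (q + 1) * j + 0 by rw [Nat.add_mul]; omega,
        hR_snake q r hq hr, hR_snake (q + 1) 0 hq1 hj0]
      by_cases hq2 : q % 2 = 0
      · rw [if_pos hq2, if_neg (by omega), hr2, Nat.sub_zero]
        exact hrow (j - 1) q (by omega) (by omega)
      · rw [if_neg hq2, if_pos (by omega), hr2, Nat.sub_self]
        exact hrow 0 q (by omega) (by omega)
  -- handoff from the snake into the gadget (odd i)
  have handoff : S + 2 = i → G.Adj (g (S * j - 1)) (g (S * j)) := by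
    intro hS2
    have hjS : j ≤ S * j := by
      have := Nat.mul_le_mul_right j hS1
      omega
    have hpar : i % 2 ≠ 0 := by
      intro h
      simp only [hSdef, if_pos h] at hS2
      omega
    have hSo : (S - 1) % 2 = 0 := by
      simp only [hSdef, if_neg hpar] at hS2 ⊢
      omega
    simp only [hgdef]
    rw [show S * j - 1 = (S - 1) * j + (j - 1) by rw [Nat.sub_mul]; omega,
      hR_snake (S - 1) (j - 1) (by omega) (by omega),
      show S * j = S * j + 0 by omega, hR_gad 0, if_pos hSo]
    rw [show (0 : ℕ) / 2 = 0 by omega, Nat.sub_zero, hsOff_top]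
    rw [show (0 + 0) % 2 = 0 by omega, Nat.add_zero]
    have := hrow (j - 1) (S - 1) (by omega) (by omega)
    rwa [show S - 1 + 1 = S by omega] at this
  -- gadget adjacency steps (odd i)
  have gad_adj : S + 2 = i → ∀ t, t + 1 < 2 * j → G.Adj (g (S * j + t)) (g (S * j + t + 1)) := by
    intro hS2 t ht
    simp only [hgdef]
    rw [Nat.add_assoc, hR_gad t, hR_gad (t + 1)]
    by_cases hpar : t % 2 = 0
    · rw [show j - 1 - (t + 1) / 2 = j - 1 - t / 2 by omega]
      set b := j - 1 - t / 2 with hbdef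
      have hb : b < j := by omega
      have hs := hsOff_le b
      by_cases hs0 : sOff j b = 0
      · rw [show (sOff j b + t) % 2 = 0 by omega, show (sOff j b + (t + 1)) % 2 = 1 by omega,
          Nat.add_zero]
        exact hrow b S hb (by omega)
      · rw [show (sOff j b + t) % 2 = 1 by omega, show (sOff j b + (t + 1)) % 2 = 0 by omega,
          Nat.add_zero]
        exact (hrow b S hb (by omega)).symm
    · have hb1 : 1 ≤ j - 1 - t / 2 := by omega
      rw [show j - 1 - (t + 1) / 2 = (j - 1 - t / 2) - 1 by omega]
      set b := j - 1 - t / 2 with hbdef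
      have hb : b < j := by omega
      have hs := hsOff_le b
      have hs' := hsOff_le (b - 1)
      rw [show (sOff j (b - 1) + (t + 1)) % 2 = sOff j (b - 1) by omega]
      by_cases hd3 : b = 3 ∧ j % 2 = 0
      · obtain ⟨hb3, hj2⟩ := hd3
        obtain ⟨hs3, hs2v⟩ := hsOff3 hj2 (by omega)
        rw [hb3]
        rw [show (3 : ℕ) - 1 = 2 by omega, hs2v, hs3]
        rw [show (0 + t) % 2 = 1 by omega, Nat.add_zero]
        exact (hdiag S (by omega) (by omega)).symm
      · have hst := hsOff_step b (by omega) (by omega) hd3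
        rw [show (sOff j b + t) % 2 = (sOff j b + 1) % 2 by omega, hst]
        have hv := hvert (b - 1) (S + sOff j (b - 1)) (by omega) (by omega)
        rw [show b - 1 + 1 = b by omega] at hv
        exact hv.symm
  -- closure edge
  have hg0 : g 0 = mk 0 0 := by
    simp only [hgdef]
    rw [show (0 : ℕ) = 0 * j + 0 by omega, hR_snake 0 0 (by omega) hj0]
    simp
  have hclose : G.Adj (g (i * j - 1)) (g 0) := by
    rw [hg0]
    by_cases hpar : i % 2 = 0
    · have hS : S = i := by simp [hSdef, hpar]
      have hjS : j ≤ i * j := by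
        have := Nat.mul_le_mul_right j hi
        omega
      simp only [hgdef]
      rw [show i * j - 1 = (i - 1) * j + (j - 1) by rw [Nat.sub_mul]; omega,
        hR_snake (i - 1) (j - 1) (by omega) (by omega), if_neg (by omega), Nat.sub_self]
      exact hwrap 0 hj0
    · have hS2 : S + 2 = i := by
        simp only [hSdef, if_neg hpar]
        omega
      have hd : i * j - 1 = S * j + (2 * j - 1) := by
        rw [hNS, if_neg hpar]
        omega
      simp only [hgdef]
      rw [hd, hR_gad (2 * j - 1), show (2 * j - 1) / 2 = j - 1 by omega, Nat.sub_self,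
        hsOff0, show (0 + (2 * j - 1)) % 2 = 1 by omega, show S + 1 = i - 1 by omega]
      exact hwrap 0 hj0
  -- injectivity
  have hginj : ∀ a b, a < i * j → b < i * j → g a = g b → a = b := by
    intro a b ha hb he
    obtain ⟨ha1, ha2⟩ := hbound a ha
    obtain ⟨hb1, hb2⟩ := hbound b hb
    obtain ⟨hrw, hcl⟩ := hinjm _ _ _ _ ha1 ha2 hb1 hb2 he
    by_cases h1 : a < S * j <;> by_cases h2 : b < S * j
    · obtain ⟨q1, r1, hr1, rfl⟩ : ∃ q r, r < j ∧ a = q * j + r :=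
        ⟨a / j, a % j, Nat.mod_lt _ hj0, by rw [Nat.mul_comm (a / j) j]; exact (Nat.div_add_mod a j).symm⟩
      obtain ⟨q2, r2, hr2, rfl⟩ : ∃ q r, r < j ∧ b = q * j + r :=
        ⟨b / j, b % j, Nat.mod_lt _ hj0, by rw [Nat.mul_comm (b / j) j]; exact (Nat.div_add_mod b j).symm⟩
      have hq1 : q1 < S := by
        by_contra hq
        have : S * j ≤ q1 * j := Nat.mul_le_mul_right j (by omega)
        omega
      have hq2 : q2 < S := by
        by_contra hq
        have : S * j ≤ q2 * j := Nat.mul_le_mul_right j (by omega)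
        omega
      rw [hR_snake q1 r1 hq1 hr1, hR_snake q2 r2 hq2 hr2] at hrw hcl
      simp only at hrw hcl
      subst hcl
      by_cases hp : q1 % 2 = 0
      · rw [if_pos hp, if_pos hp] at hrw
        omega
      · rw [if_neg hp, if_neg hp] at hrw
        omega
    · exfalso
      obtain ⟨q1, r1, hr1, rfl⟩ : ∃ q r, r < j ∧ a = q * j + r :=
        ⟨a / j, a % j, Nat.mod_lt _ hj0, by rw [Nat.mul_comm (a / j) j]; exact (Nat.div_add_mod a j).symm⟩
      have hq1 : q1 < S := by
        by_contra hq
        have : S * j ≤ q1 * j := Nat.mul_le_mul_right j (by omega)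
        omega
      obtain ⟨t, rfl⟩ : ∃ t, b = S * j + t := ⟨b - S * j, by omega⟩
      rw [hR_snake q1 r1 hq1 hr1, hR_gad t] at hcl
      simp only at hcl
      omega
    · exfalso
      obtain ⟨q1, r1, hr1, rfl⟩ : ∃ q r, r < j ∧ b = q * j + r :=
        ⟨b / j, b % j, Nat.mod_lt _ hj0, by rw [Nat.mul_comm (b / j) j]; exact (Nat.div_add_mod b j).symm⟩
      have hq1 : q1 < S := by
        by_contra hq
        have : S * j ≤ q1 * j := Nat.mul_le_mul_right j (by omega)
        omega
      obtain ⟨t, rfl⟩ : ∃ t, a = S * j + t := ⟨a - S * j, by omega⟩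
      rw [hR_snake q1 r1 hq1 hr1, hR_gad t] at hcl
      simp only at hcl
      omega
    · obtain ⟨t1, rfl⟩ : ∃ t, a = S * j + t := ⟨a - S * j, by omega⟩
      obtain ⟨t2, rfl⟩ : ∃ t, b = S * j + t := ⟨b - S * j, by omega⟩
      rw [hR_gad t1, hR_gad t2] at hrw hcl
      simp only at hrw hcl
      have hb12 : j - 1 - t1 / 2 = j - 1 - t2 / 2 := hrw
      have ht1 : t1 < 2 * j := by
        rcases Nat.lt_or_ge t1 (2 * j) with h | h
        · exact h
        · exfalso; rw [hNS] at ha; split at ha <;> omega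
      have ht2 : t2 < 2 * j := by
        rcases Nat.lt_or_ge t2 (2 * j) with h | h
        · exact h
        · exfalso; rw [hNS] at hb; split at hb <;> omega
      have hdiv : t1 / 2 = t2 / 2 := by omega
      rw [hdiv] at hcl
      have := hsOff_le (j - 1 - t2 / 2)
      omega
  -- surjectivity
  have hgsurj : ∀ v : V, ∃ n, n < i * j ∧ g n = v := by
    intro v
    obtain ⟨b, c, hb, hc, rfl⟩ := hsurjm v
    by_cases h1 : c < S
    · refine ⟨c * j + (if c % 2 = 0 then b else j - 1 - b), ?_, ?_⟩
      · have h3 := hsnakelt c (if c % 2 = 0 then b else j - 1 - b) h1 (by split <;> omega)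
        have h4 : S * j ≤ i * j := Nat.mul_le_mul_right j hSi
        omega
      · simp only [hgdef]
        rw [hR_snake c _ h1 (by split <;> omega)]
        by_cases hc2 : c % 2 = 0
        · simp [hc2]
        · simp only [if_neg hc2]
          rw [show j - 1 - (j - 1 - b) = b by omega]
    · have hpar : i % 2 ≠ 0 := by
        intro h
        simp only [hSdef, if_pos h] at h1
        omega
      have hS2 : S + 2 = i := by
        simp only [hSdef, if_neg hpar]
        omega
      have hsb := hsOff_le b
      refine ⟨S * j + (2 * (j - 1 - b) + (c - S + sOff j b) % 2), ?_, ?_⟩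
      · rw [hNS, if_neg hpar]
        omega
      · simp only [hgdef]
        rw [hR_gad]
        rw [show (2 * (j - 1 - b) + (c - S + sOff j b) % 2) / 2 = j - 1 - b by omega]
        rw [show j - 1 - (j - 1 - b) = b by omega]
        rw [show S + (sOff j b + (2 * (j - 1 - b) + (c - S + sOff j b) % 2)) % 2 = c by omega]
  -- assemble
  have h3N : 3 ≤ i * j := by
    have := Nat.mul_le_mul hi hj
    omega
  refine ham_of_fn G g (i * j) h3N ?_ hclose hginj hgsurj
  intro n hn
  by_cases h1 : n + 1 < S * j
  · exact snake_adj n h1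
  · by_cases hpar : i % 2 = 0
    · exfalso
      rw [hNS, if_pos hpar] at hn
      omega
    · have hS2 : S + 2 = i := by
        simp only [hSdef, if_neg hpar]
        omega
      have hN : i * j = S * j + 2 * j := by rw [hNS, if_neg hpar]
      by_cases h2 : n < S * j
      · have hSj : 1 ≤ S * j := by
          have := Nat.mul_le_mul hS1 hj0
          omega
        have hn' : n = S * j - 1 := by omega
        rw [hn', show S * j - 1 + 1 = S * j by omega]
        exact handoff hS2
      · obtain ⟨t, ht, rfl⟩ : ∃ t, t + 1 < 2 * j ∧ n = S * j + t :=
          ⟨n - S * j, by omega, by omega⟩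
        exact gad_adj hS2 t ht

end HamAux


/-- The edge graph of the doubly semi-equivelar map of type `[3³.4²:4⁴]₁` in its
`M(i,j,k)`-representation (`j = 3m`): the twisted toroidal grid together with diagonal
edges `{(b,a),(b+1,a+1)}` for rows `b ≡ 2 (mod 3)` and the wrap-around diagonals
`{(j-1,a),(0,a+k+1)}`, is Hamiltonian. -/
theorem dsem_3_3_4_2_4_4_1_hamiltonian (m i j k : ℕ) (hm : 1 ≤ m) (hj : j = 3 * m)
    (hi : 3 ≤ i) (hk : k ≤ i - 1) :
    ∃ (v : Fin j × ZMod i)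
      (c : (twistedGrid i j k ⊔ SimpleGraph.fromRel (fun p q : Fin j × ZMod i =>
        ((p.1 : ℕ) % 3 = 2 ∧ (q.1 : ℕ) = (p.1 : ℕ) + 1 ∧ q.2 = p.2 + 1) ∨
        ((p.1 : ℕ) = j - 1 ∧ (q.1 : ℕ) = 0 ∧ q.2 = p.2 + (k : ZMod i) + 1))).Walk v v),
      c.IsHamiltonianCycle := by
  haveI : NeZero i := ⟨by omega⟩
  have hj3 : 3 ≤ j := by omega
  have hj0 : 0 < j := by omega
  set G := (twistedGrid i j k ⊔ SimpleGraph.fromRel (fun p q : Fin j × ZMod i =>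
        ((p.1 : ℕ) % 3 = 2 ∧ (q.1 : ℕ) = (p.1 : ℕ) + 1 ∧ q.2 = p.2 + 1) ∨
        ((p.1 : ℕ) = j - 1 ∧ (q.1 : ℕ) = 0 ∧ q.2 = p.2 + (k : ZMod i) + 1))) with hG
  set mk : ℕ → ℕ → Fin j × ZMod i :=
    fun b c => (⟨b % j, Nat.mod_lt _ hj0⟩, (c : ZMod i)) with hmk
  -- cast helpers
  have hcne : ∀ a b : ℕ, a < i → b < i → a ≠ b → ((a : ZMod i) ≠ (b : ZMod i)) := by
    intro a b ha hb hne h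
    apply hne
    have := congrArg ZMod.val h
    rwa [ZMod.val_cast_of_lt ha, ZMod.val_cast_of_lt hb] at this
  have hsucc : ∀ a : ℕ, ((a + 1 : ℕ) : ZMod i) = (a : ZMod i) + 1 := by
    intro a; push_cast; ring
  have hfne : ∀ b b' c c' : ℕ, b < j → b' < j → b ≠ b' → mk b c ≠ mk b' c' := by
    intro b b' c c' hb hb' hne h
    apply hne
    have := congrArg (fun p => (Prod.fst p : Fin j).val) h
    simpa [hmk, Nat.mod_eq_of_lt hb, Nat.mod_eq_of_lt hb'] using this
  refine HamAux.ham_aux G i j hi hj3 mk ?_ ?_ ?_ ?_ ?_ ?_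
  · -- hrow
    intro b c hb hc
    have hne : mk b c ≠ mk b (c + 1) := by
      intro h
      exact hcne c (c + 1) (by omega) (by omega) (by omega)
        (congrArg Prod.snd h)
    rw [hG]
    refine Or.inl ?_
    rw [twistedGrid, SimpleGraph.fromRel_adj]
    exact ⟨hne, Or.inl (Or.inl ⟨rfl, hsucc c⟩)⟩
  · -- hwrap
    intro b hb
    have hne : mk b (i - 1) ≠ mk b 0 := by
      intro h
      exact hcne (i - 1) 0 (by omega) (by omega) (by omega) (congrArg Prod.snd h)
    rw [hG]
    refine Or.inl ?_
    rw [twistedGrid, SimpleGraph.fromRel_adj]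
    refine ⟨hne, Or.inl (Or.inl ⟨rfl, ?_⟩)⟩
    show ((0 : ℕ) : ZMod i) = ((i - 1 : ℕ) : ZMod i) + 1
    rw [← hsucc (i - 1), show i - 1 + 1 = i by omega, Nat.cast_zero, ZMod.natCast_self]
  · -- hvert
    intro b c hb hc
    rw [hG]
    refine Or.inl ?_
    rw [twistedGrid, SimpleGraph.fromRel_adj]
    refine ⟨hfne b (b + 1) c c (by omega) hb (by omega), Or.inl (Or.inr (Or.inl ⟨?_, rfl⟩))⟩
    show (b + 1) % j = b % j + 1
    rw [Nat.mod_eq_of_lt hb, Nat.mod_eq_of_lt (by omega)]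
  · -- hdiag
    intro c hc hj4
    rw [hG]
    refine Or.inr ?_
    rw [SimpleGraph.fromRel_adj]
    refine ⟨hfne 2 3 c (c + 1) (by omega) (by omega) (by omega), Or.inl (Or.inl ⟨?_, ?_, ?_⟩)⟩
    · show (2 % j) % 3 = 2
      rw [show 2 % j = 2 from Nat.mod_eq_of_lt (by omega)]
    · show 3 % j = 2 % j + 1
      rw [show 2 % j = 2 from Nat.mod_eq_of_lt (by omega),
        show 3 % j = 3 from Nat.mod_eq_of_lt (by omega)]
    · exact hsucc c
  · -- hinjm
    intro b c b' c' hb hc hb' hc' h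
    constructor
    · have := congrArg (fun p => (Prod.fst p : Fin j).val) h
      simpa [hmk, Nat.mod_eq_of_lt hb, Nat.mod_eq_of_lt hb'] using this
    · have := congrArg (fun p => (Prod.snd p : ZMod i).val) h
      simpa [hmk, ZMod.val_cast_of_lt hc, ZMod.val_cast_of_lt hc'] using this
  · -- hsurjm
    intro v
    refine ⟨v.1.val, v.2.val, v.1.isLt, ZMod.val_lt v.2, ?_⟩
    rw [hmk]
    ext
    · simp [Nat.mod_eq_of_lt v.1.isLt]
    · simp [ZMod.natCast_rightInverse v.2]
end

section
/- Let m ≥ 1, i ≥ 3 and 0 ≤ k ≤ i−1 be integers and set j = 4m. Let G be the simple graph on the vertex set (Fin j) × (ZMod i) whose edges are all edges of the twisted toroidal grid T(i,j,k) together with the diagonal edges {(b,a),(b+1,a+1)} for all a ∈ ZMod i and all b with 0 ≤ b ≤ j−2 and b ≡ 3 (mod 4), and the wrap-around diagonal edges {(j−1,a),(0,a+k+1)} for all a ∈ ZMod i. Then G has a Hamiltonian cycle. -/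
open SimpleGraph


variable {α : Type*}

/-- Descending walk along an enumeration. -/
def descWalk (G : SimpleGraph α) (f : ℕ → α) :
    (ℓ : ℕ) → (∀ t, t < ℓ → G.Adj (f t) (f (t + 1))) → G.Walk (f ℓ) (f 0)
  | 0, _ => Walk.nil
  | (ℓ + 1), h => Walk.cons (h ℓ (by omega)).symm (descWalk G f ℓ (fun t ht => h t (by omega)))

lemma descWalk_support (G : SimpleGraph α) (f : ℕ → α) (ℓ : ℕ)
    (h : ∀ t, t < ℓ → G.Adj (f t) (f (t + 1))) :
    (descWalk G f ℓ h).support = (List.range (ℓ + 1)).reverse.map f := by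
  induction ℓ with
  | zero => simp [descWalk, List.range_succ]
  | succ ℓ ih => simp [descWalk, ih, List.range_succ]

lemma descWalk_edges_not_mem (G : SimpleGraph α) (f : ℕ → α) {n : ℕ} (hn : 3 ≤ n)
    (hinj : ∀ a b, a < n → b < n → f a = f b → a = b)
    (ℓ : ℕ) (hℓ : ℓ ≤ n - 1)
    (h : ∀ t, t < ℓ → G.Adj (f t) (f (t + 1))) :
    s(f 0, f (n - 1)) ∉ (descWalk G f ℓ h).edges := by
  induction ℓ with
  | zero => simp [descWalk]
  | succ ℓ ih =>
    simp only [descWalk, Walk.edges_cons, List.mem_cons, not_or]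
    refine ⟨?_, ih (by omega) _⟩
    intro hEq
    rw [Sym2.eq_iff] at hEq
    rcases hEq with ⟨h1, h2⟩ | ⟨h1, h2⟩
    · have := hinj 0 (ℓ + 1) (by omega) (by omega) h1
      omega
    · have e1 := hinj 0 ℓ (by omega) (by omega) h1
      have e2 := hinj (n - 1) (ℓ + 1) (by omega) (by omega) h2
      omega

lemma ham_of_cyclic [DecidableEq α] [Fintype α] {G : SimpleGraph α} {n : ℕ} (hn : 3 ≤ n)
    (f : ℕ → α)
    (hinj : ∀ a b, a < n → b < n → f a = f b → a = b)
    (hsurj : ∀ v, ∃ t, t < n ∧ f t = v)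
    (hadj : ∀ t, t + 1 < n → G.Adj (f t) (f (t + 1)))
    (hwrap : G.Adj (f (n - 1)) (f 0)) :
    ∃ v, ∃ c : G.Walk v v, c.IsHamiltonianCycle := by
  have hA : ∀ t, t < n - 1 → G.Adj (f t) (f (t + 1)) := fun t ht => hadj t (by omega)
  set p : G.Walk (f (n - 1)) (f 0) := descWalk G f (n - 1) hA with hp
  have hsup : p.support = (List.range n).reverse.map f := by
    rw [hp, descWalk_support]
    have h' : n - 1 + 1 = n := by omega
    rw [h']
  have hnodup : p.support.Nodup := by
    rw [hsup]
    refine List.Nodup.map_on ?_ (by rw [List.nodup_reverse]; exact List.nodup_range)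
    intro x hx y hy hfxy
    simp only [List.mem_reverse, List.mem_range] at hx hy
    exact hinj x y hx hy hfxy
  have hpath : p.IsPath := Walk.IsPath.mk' hnodup
  have hne : s(f 0, f (n - 1)) ∉ p.edges := descWalk_edges_not_mem G f hn hinj _ le_rfl hA
  refine ⟨f 0, Walk.cons hwrap.symm p, ?_⟩
  rw [Walk.isHamiltonianCycle_iff_isCycle_and_support_count_tail_eq_one]
  constructor
  · exact (Walk.cons_isCycle_iff p hwrap.symm).mpr ⟨hpath, hne⟩
  · intro a
    rw [Walk.support_cons, List.tail_cons]
    refine List.count_eq_one_of_mem hnodup ?_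
    rw [hsup]
    obtain ⟨t, ht, rfl⟩ := hsurj a
    simp only [List.mem_map, List.mem_reverse, List.mem_range]
    exact ⟨t, ht, rfl⟩


/-- Row of the serpentine Hamiltonian enumeration. -/
def serpRow (i j t : ℕ) : ℕ :=
  if t < i then 0
  else if t < i + (j-2)*(i-1) then (t-i)/(i-1) + 1
  else if t < 2*i + (j-2)*(i-1) then j-1
  else j - 2 - (t - (2*i + (j-2)*(i-1)))

/-- Column of the serpentine Hamiltonian enumeration. -/
def serpCol (i j t : ℕ) : ℕ :=
  if t < i then t
  else if t < i + (j-2)*(i-1) then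
    (if ((t-i)/(i-1)) % 2 = 0 then i - 1 - (t-i) % (i-1) else (t-i) % (i-1) + 1)
  else if t < 2*i + (j-2)*(i-1) then i - 1 - (t - (i + (j-2)*(i-1)))
  else 0

lemma serpRow_lt {i j : ℕ} (hi : 3 ≤ i) (hj : 4 ≤ j) (t : ℕ) : serpRow i j t < j := by
  unfold serpRow
  split_ifs with h1 h2 h3
  · omega
  · have hd : (t-i)/(i-1) < j-2 := by
      rw [Nat.div_lt_iff_lt_mul (by omega)]
      have : (j-2)*(i-1) = (i-1)*(j-2) := mul_comm _ _
      omega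
    omega
  · omega
  · omega

/-- The serpentine enumeration itself. -/
def serp (i j : ℕ) (hj0 : 0 < j) (t : ℕ) : Fin j × ZMod i :=
  (⟨serpRow i j t % j, Nat.mod_lt _ hj0⟩, (serpCol i j t : ZMod i))

lemma serp_eq {i j : ℕ} (hj0 : 0 < j) {t b c : ℕ} (hb : b < j)
    (hrow : serpRow i j t = b) (hcol : serpCol i j t = c) :
    serp i j hj0 t = (⟨b, hb⟩, (c : ZMod i)) := by
  simp [serp, hrow, hcol, Nat.mod_eq_of_lt hb]

section specs
variable {i j : ℕ} (hi : 3 ≤ i) (hj : 4 ≤ j)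

include hi hj

lemma serp_spec1 {t : ℕ} (h : t < i) : serpRow i j t = 0 ∧ serpCol i j t = t := by
  unfold serpRow serpCol
  rw [if_pos h, if_pos h]
  exact ⟨rfl, rfl⟩

lemma serp_spec2 {t b r : ℕ} (hb : b ≤ j-3) (hr : r < i-1) (ht : t = i + b*(i-1) + r) :
    serpRow i j t = b + 1 ∧
    serpCol i j t = if b % 2 = 0 then i - 1 - r else r + 1 := by
  subst ht
  have hmul : (b+1)*(i-1) ≤ (j-2)*(i-1) := Nat.mul_le_mul_right _ (by omega)
  have hexp : (b+1)*(i-1) = b*(i-1) + (i-1) := by ring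
  have h1 : ¬ (i + b*(i-1) + r < i) := by omega
  have h2 : i + b*(i-1) + r < i + (j-2)*(i-1) := by omega
  have hsub : i + b*(i-1) + r - i = (i-1)*b + r := by
    have : b*(i-1) = (i-1)*b := mul_comm _ _
    omega
  have hdiv : ((i-1)*b + r) / (i-1) = b := by
    rw [Nat.mul_add_div (by omega), Nat.div_eq_of_lt hr]
    omega
  have hmod : ((i-1)*b + r) % (i-1) = r := by
    rw [Nat.mul_add_mod]
    exact Nat.mod_eq_of_lt hr
  unfold serpRow serpCol
  rw [if_neg h1, if_neg h1, if_pos h2, if_pos h2, hsub, hdiv, hmod]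
  exact ⟨rfl, rfl⟩

lemma serp_spec3 {t s : ℕ} (hs : s < i) (ht : t = i + (j-2)*(i-1) + s) :
    serpRow i j t = j - 1 ∧ serpCol i j t = i - 1 - s := by
  subst ht
  have h1 : ¬ (i + (j-2)*(i-1) + s < i) := by omega
  have h2 : ¬ (i + (j-2)*(i-1) + s < i + (j-2)*(i-1)) := by omega
  have h3 : i + (j-2)*(i-1) + s < 2*i + (j-2)*(i-1) := by omega
  have hsub : i + (j-2)*(i-1) + s - (i + (j-2)*(i-1)) = s := by omega
  unfold serpRow serpCol
  rw [if_neg h1, if_neg h1, if_neg h2, if_neg h2, if_pos h3, if_pos h3, hsub]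
  exact ⟨rfl, rfl⟩

lemma serp_spec4 {t s : ℕ} (hs : s < j-2) (ht : t = 2*i + (j-2)*(i-1) + s) :
    serpRow i j t = j - 2 - s ∧ serpCol i j t = 0 := by
  subst ht
  have h1 : ¬ (2*i + (j-2)*(i-1) + s < i) := by omega
  have h2 : ¬ (2*i + (j-2)*(i-1) + s < i + (j-2)*(i-1)) := by omega
  have h3 : ¬ (2*i + (j-2)*(i-1) + s < 2*i + (j-2)*(i-1)) := by omega
  have hsub : 2*i + (j-2)*(i-1) + s - (2*i + (j-2)*(i-1)) = s := by omega
  unfold serpRow serpCol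
  rw [if_neg h1, if_neg h1, if_neg h2, if_neg h2, if_neg h3, if_neg h3, hsub]
  exact ⟨rfl, rfl⟩

end specs

lemma tg_adj_row {i j k : ℕ} (hi : 3 ≤ i) (b : Fin j) {c1 c2 : ℕ} (h1 : c1 < i) (h2 : c2 < i)
    (h : c2 = c1 + 1 ∨ c1 = c2 + 1) :
    (twistedGrid i j k).Adj (b, (c1 : ZMod i)) (b, (c2 : ZMod i)) := by
  haveI : NeZero i := ⟨by omega⟩
  rw [twistedGrid, SimpleGraph.fromRel_adj]
  constructor
  · intro he
    have hc := congrArg Prod.snd he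
    simp only at hc
    have := congrArg ZMod.val hc
    rw [ZMod.val_cast_of_lt h1, ZMod.val_cast_of_lt h2] at this
    omega
  · rcases h with h | h
    · exact Or.inl (Or.inl ⟨rfl, by rw [h]; push_cast; ring⟩)
    · exact Or.inr (Or.inl ⟨rfl, by rw [h]; push_cast; ring⟩)

lemma tg_adj_vert {i j k : ℕ} (b1 b2 : Fin j) (c : ZMod i)
    (h : (b2 : ℕ) = (b1 : ℕ) + 1 ∨ (b1 : ℕ) = (b2 : ℕ) + 1) :
    (twistedGrid i j k).Adj (b1, c) (b2, c) := by
  rw [twistedGrid, SimpleGraph.fromRel_adj]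
  constructor
  · intro he
    have hb := congrArg (fun p => ((p.1 : Fin j) : ℕ)) he
    simp only at hb
    omega
  · rcases h with h | h
    · exact Or.inl (Or.inr (Or.inl ⟨h, rfl⟩))
    · exact Or.inr (Or.inr (Or.inl ⟨h, rfl⟩))


/-- The edge graph of the doubly semi-equivelar map of type `[3³.4²:4⁴]₂` in its
`M(i,j,k)`-representation (`j = 4m`): the twisted toroidal grid together with diagonal
edges `{(b,a),(b+1,a+1)}` for rows `b ≡ 3 (mod 4)` and the wrap-around diagonals
`{(j-1,a),(0,a+k+1)}`, is Hamiltonian. -/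
theorem dsem_3_3_4_2_4_4_2_hamiltonian (m i j k : ℕ) (hm : 1 ≤ m) (hj : j = 4 * m)
    (hi : 3 ≤ i) (hk : k ≤ i - 1) :
    ∃ (v : Fin j × ZMod i)
      (c : (twistedGrid i j k ⊔ SimpleGraph.fromRel (fun p q : Fin j × ZMod i =>
        ((p.1 : ℕ) % 4 = 3 ∧ (q.1 : ℕ) = (p.1 : ℕ) + 1 ∧ q.2 = p.2 + 1) ∨
        ((p.1 : ℕ) = j - 1 ∧ (q.1 : ℕ) = 0 ∧ q.2 = p.2 + (k : ZMod i) + 1))).Walk v v),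
      c.IsHamiltonianCycle := by
  classical
  haveI : NeZero i := ⟨by omega⟩
  have hj4 : 4 ≤ j := by omega
  have hj0 : 0 < j := by omega
  have hje : j % 2 = 0 := by omega
  set GG := twistedGrid i j k ⊔ SimpleGraph.fromRel (fun p q : Fin j × ZMod i =>
        ((p.1 : ℕ) % 4 = 3 ∧ (q.1 : ℕ) = (p.1 : ℕ) + 1 ∧ q.2 = p.2 + 1) ∨
        ((p.1 : ℕ) = j - 1 ∧ (q.1 : ℕ) = 0 ∧ q.2 = p.2 + (k : ZMod i) + 1)) with hGG
  have hlift : ∀ {x y : Fin j × ZMod i}, (twistedGrid i j k).Adj x y → GG.Adj x y := by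
    intro x y h
    rw [hGG]
    exact (SimpleGraph.sup_adj _ _ _ _).mpr (Or.inl h)
  have h12 : 4*3 ≤ j*i := Nat.mul_le_mul hj4 hi
  have hn3 : 3 ≤ j * i := by omega
  have hnq : j*i = 2*i + (j-2)*(i-1) + (j-2) := by
    obtain ⟨i', rfl⟩ : ∃ i', i = i'+1 := ⟨i-1, by omega⟩
    obtain ⟨j', rfl⟩ : ∃ j', j = j'+2 := ⟨j-2, by omega⟩
    simp only [Nat.add_sub_cancel]
    ring
  -- surjectivity
  have hsurj : ∀ v : Fin j × ZMod i, ∃ t, t < j*i ∧ serp i j hj0 t = v := by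
    rintro ⟨b, a⟩
    have hb := b.isLt
    have ha : a.val < i := ZMod.val_lt a
    have hacast : ((a.val : ℕ) : ZMod i) = a := ZMod.natCast_rightInverse a
    by_cases hb0 : (b : ℕ) = 0
    · refine ⟨a.val, by omega, ?_⟩
      have hsp := serp_spec1 (i := i) (j := j) hi hj4 ha
      rw [serp_eq hj0 (show 0 < j by omega) hsp.1 hsp.2, hacast]
      exact Prod.ext (Fin.ext (by simp [hb0])) rfl
    · by_cases hbj : (b : ℕ) = j - 1
      · refine ⟨i + (j-2)*(i-1) + (i-1-a.val), by omega, ?_⟩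
        have hsp := serp_spec3 hi hj4 (show i-1-a.val < i by omega) rfl
        have hcol : serpCol i j (i + (j-2)*(i-1) + (i-1-a.val)) = a.val := by
          rw [hsp.2]; omega
        rw [serp_eq hj0 (show j-1 < j by omega) hsp.1 hcol, hacast]
        exact Prod.ext (Fin.ext (by simp [hbj])) rfl
      · by_cases ha0 : a.val = 0
        · refine ⟨2*i + (j-2)*(i-1) + (j-2-(b:ℕ)), by omega, ?_⟩
          have hsp := serp_spec4 hi hj4 (show j-2-(b:ℕ) < j-2 by omega) rfl
          have hrow : serpRow i j (2*i + (j-2)*(i-1) + (j-2-(b:ℕ))) = (b:ℕ) := by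
            rw [hsp.1]; omega
          rw [serp_eq hj0 (by omega : (b:ℕ) < j) hrow hsp.2]
          refine Prod.ext (Fin.ext (by simp)) ?_
          simp only
          rw [← hacast, ha0]
        · set r : ℕ := if (b:ℕ) % 2 = 1 then i-1-a.val else a.val - 1 with hrdef
          have hrlt : r < i - 1 := by rw [hrdef]; split_ifs <;> omega
          have hmul : ((b:ℕ)-1+1)*(i-1) ≤ (j-2)*(i-1) := Nat.mul_le_mul_right _ (by omega)
          have hexp : ((b:ℕ)-1+1)*(i-1) = ((b:ℕ)-1)*(i-1) + (i-1) := by ring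
          refine ⟨i + ((b:ℕ)-1)*(i-1) + r, by omega, ?_⟩
          have hsp := serp_spec2 hi hj4 (show (b:ℕ)-1 ≤ j-3 by omega) hrlt rfl
          have hrow : serpRow i j (i + ((b:ℕ)-1)*(i-1) + r) = (b:ℕ) := by
            rw [hsp.1]; omega
          have hcol : serpCol i j (i + ((b:ℕ)-1)*(i-1) + r) = a.val := by
            rw [hsp.2, hrdef]
            by_cases hp : (b:ℕ) % 2 = 1
            · rw [if_pos (by omega), if_pos hp]; omega
            · rw [if_neg (by omega), if_neg hp]; omega
          rw [serp_eq hj0 b.isLt hrow hcol, hacast]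
  -- injectivity
  have hinj : ∀ a b, a < j*i → b < j*i → serp i j hj0 a = serp i j hj0 b → a = b := by
    have hcard : Fintype.card (Fin j × ZMod i) = j * i := by
      rw [Fintype.card_prod, Fintype.card_fin, ZMod.card]
    have hbij : Function.Bijective (fun t : Fin (j*i) => serp i j hj0 t.val) := by
      rw [Fintype.bijective_iff_surjective_and_card]
      constructor
      · intro v
        obtain ⟨t, htn, he⟩ := hsurj v
        exact ⟨⟨t, htn⟩, he⟩
      · simp [hcard]
    intro a b ha hb he
    have := hbij.1 (a₁ := ⟨a, ha⟩) (a₂ := ⟨b, hb⟩) he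
    exact Fin.mk.inj_iff.mp this
  -- adjacency
  have hadj : ∀ t, t + 1 < j*i → GG.Adj (serp i j hj0 t) (serp i j hj0 (t+1)) := by
    intro t ht
    by_cases hA : t + 1 < i
    · have e1 := serp_spec1 (i := i) (j := j) hi hj4 (show t < i by omega)
      have e2 := serp_spec1 (i := i) (j := j) hi hj4 hA
      rw [serp_eq hj0 hj0 e1.1 e1.2, serp_eq hj0 hj0 e2.1 e2.2]
      exact hlift (tg_adj_row hi _ (by omega) (by omega) (Or.inl rfl))
    · by_cases hB : t + 1 = i
      · have e1 := serp_spec1 (i := i) (j := j) hi hj4 (show t < i by omega)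
        have e2 := serp_spec2 hi hj4 (show 0 ≤ j-3 by omega) (show 0 < i-1 by omega)
          (show t+1 = i + 0*(i-1) + 0 by have h0 : 0*(i-1) = 0 := Nat.zero_mul _; omega)
        have hcol2 : serpCol i j (t+1) = i-1 := by rw [e2.2]; norm_num
        have hcol1 : serpCol i j t = i-1 := by rw [e1.2]; omega
        rw [serp_eq hj0 hj0 e1.1 hcol1, serp_eq hj0 (by omega) e2.1 hcol2]
        exact hlift (tg_adj_vert _ _ _ (Or.inl rfl))
      · by_cases hC : t + 1 < i + (j-2)*(i-1)
        · have hti : i ≤ t := by omega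
          have hdm := Nat.div_add_mod (t-i) (i-1)
          set q := (t-i)/(i-1) with hq
          set r := (t-i)%(i-1) with hr
          have hrlt : r < i-1 := Nat.mod_lt _ (by omega)
          have hcm : (i-1)*q = q*(i-1) := mul_comm _ _
          have hqle : q ≤ j-3 := by
            by_contra hcon
            have h1 : (j-2)*(i-1) ≤ q*(i-1) := Nat.mul_le_mul_right _ (by omega)
            omega
          have htform : t = i + q*(i-1) + r := by omega
          have e1 := serp_spec2 hi hj4 hqle hrlt htform
          by_cases hD : r + 1 < i - 1
          · have e2 := serp_spec2 hi hj4 hqle hD (show t+1 = i + q*(i-1) + (r+1) by omega)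
            by_cases hp : q % 2 = 0
            · have hcol1 : serpCol i j t = i-1-r := by rw [e1.2, if_pos hp]
              have hcol2 : serpCol i j (t+1) = i-1-(r+1) := by rw [e2.2, if_pos hp]
              rw [serp_eq hj0 (by omega) e1.1 hcol1, serp_eq hj0 (by omega) e2.1 hcol2]
              exact hlift (tg_adj_row hi _ (by omega) (by omega) (Or.inr (by omega)))
            · have hcol1 : serpCol i j t = r+1 := by rw [e1.2, if_neg hp]
              have hcol2 : serpCol i j (t+1) = r+1+1 := by rw [e2.2, if_neg hp]
              rw [serp_eq hj0 (by omega) e1.1 hcol1, serp_eq hj0 (by omega) e2.1 hcol2]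
              exact hlift (tg_adj_row hi _ (by omega) (by omega) (Or.inl rfl))
          · have hexp : (q+1)*(i-1) = q*(i-1) + (i-1) := by ring
            have hq1 : q + 1 ≤ j - 3 := by
              by_contra hcon
              have hq3 : q = j-3 := by omega
              have hjm : (j-2)*(i-1) = (j-3)*(i-1) + (i-1) := by
                have hh : j-2 = (j-3)+1 := by omega
                rw [hh]; ring
              have hqq : q*(i-1) = (j-3)*(i-1) := by rw [hq3]
              omega
            have e2 := serp_spec2 hi hj4 hq1 (show 0 < i-1 by omega)
              (show t+1 = i + (q+1)*(i-1) + 0 by omega)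
            by_cases hp : q % 2 = 0
            · have hcol1 : serpCol i j t = 1 := by rw [e1.2, if_pos hp]; omega
              have hcol2 : serpCol i j (t+1) = 1 := by rw [e2.2, if_neg (by omega)]
              rw [serp_eq hj0 (by omega) e1.1 hcol1, serp_eq hj0 (by omega) e2.1 hcol2]
              exact hlift (tg_adj_vert _ _ _ (Or.inl rfl))
            · have hcol1 : serpCol i j t = i-1 := by rw [e1.2, if_neg hp]; omega
              have hcol2 : serpCol i j (t+1) = i-1 := by rw [e2.2, if_pos (by omega)]; omega
              rw [serp_eq hj0 (by omega) e1.1 hcol1, serp_eq hj0 (by omega) e2.1 hcol2]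
              exact hlift (tg_adj_vert _ _ _ (Or.inl rfl))
        · by_cases hE : t + 1 = i + (j-2)*(i-1)
          · have hjm : (j-2)*(i-1) = (j-3)*(i-1) + (i-1) := by
              have hh : j-2 = (j-3)+1 := by omega
              rw [hh]; ring
            have e1 := serp_spec2 hi hj4 (le_refl (j-3)) (show i-2 < i-1 by omega)
              (show t = i + (j-3)*(i-1) + (i-2) by omega)
            have e2 := serp_spec3 hi hj4 (show 0 < i by omega)
              (show t+1 = i + (j-2)*(i-1) + 0 by omega)
            have hrow1 : serpRow i j t = j-2 := by rw [e1.1]; omega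
            have hcol1 : serpCol i j t = i-1 := by rw [e1.2, if_neg (by omega)]; omega
            have hcol2 : serpCol i j (t+1) = i-1 := by rw [e2.2]; omega
            rw [serp_eq hj0 (by omega) hrow1 hcol1, serp_eq hj0 (by omega) e2.1 hcol2]
            exact hlift (tg_adj_vert _ _ _ (Or.inl (by simp; omega)))
          · by_cases hF : t + 1 < 2*i + (j-2)*(i-1)
            · have hge : i + (j-2)*(i-1) ≤ t := by omega
              have e1 := serp_spec3 hi hj4 (show t - (i + (j-2)*(i-1)) < i by omega)
                (show t = i + (j-2)*(i-1) + (t - (i + (j-2)*(i-1))) by omega)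
              have e2 := serp_spec3 hi hj4 (show (t - (i + (j-2)*(i-1))) + 1 < i by omega)
                (show t+1 = i + (j-2)*(i-1) + ((t - (i + (j-2)*(i-1))) + 1) by omega)
              rw [serp_eq hj0 (by omega) e1.1 e1.2, serp_eq hj0 (by omega) e2.1 e2.2]
              exact hlift (tg_adj_row hi _ (by omega) (by omega) (Or.inr (by omega)))
            · by_cases hG : t + 1 = 2*i + (j-2)*(i-1)
              · have e1 := serp_spec3 hi hj4 (show i-1 < i by omega)
                  (show t = i + (j-2)*(i-1) + (i-1) by omega)
                have hcol1 : serpCol i j t = 0 := by rw [e1.2]; omega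
                have e2 := serp_spec4 hi hj4 (show 0 < j-2 by omega)
                  (show t+1 = 2*i + (j-2)*(i-1) + 0 by omega)
                have hrow2 : serpRow i j (t+1) = j-2 := e2.1.trans (by omega)
                rw [serp_eq hj0 (by omega) e1.1 hcol1, serp_eq hj0 (by omega) hrow2 e2.2]
                exact hlift (tg_adj_vert _ _ _ (Or.inr (by simp; omega)))
              · have hge : 2*i + (j-2)*(i-1) ≤ t := by omega
                have hs : (t - (2*i + (j-2)*(i-1))) + 1 < j - 2 := by omega
                have e1 := serp_spec4 hi hj4 (show t - (2*i + (j-2)*(i-1)) < j-2 by omega)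
                  (show t = 2*i + (j-2)*(i-1) + (t - (2*i + (j-2)*(i-1))) by omega)
                have e2 := serp_spec4 hi hj4 hs
                  (show t+1 = 2*i + (j-2)*(i-1) + ((t - (2*i + (j-2)*(i-1))) + 1) by omega)
                rw [serp_eq hj0 (by omega) e1.1 e1.2, serp_eq hj0 (by omega) e2.1 e2.2]
                exact hlift (tg_adj_vert _ _ _ (Or.inr (by simp; omega)))
  -- wrap edge
  have hwrap : GG.Adj (serp i j hj0 (j*i - 1)) (serp i j hj0 0) := by
    have e1 := serp_spec4 hi hj4 (show j-3 < j-2 by omega)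
      (show j*i-1 = 2*i + (j-2)*(i-1) + (j-3) by omega)
    have hrow1 : serpRow i j (j*i-1) = 1 := by rw [e1.1]; omega
    have e0 := serp_spec1 (i := i) (j := j) hi hj4 (show 0 < i by omega)
    rw [serp_eq hj0 (by omega) hrow1 e1.2, serp_eq hj0 hj0 e0.1 e0.2]
    exact hlift (tg_adj_vert _ _ _ (Or.inr (by simp)))
  exact ham_of_cyclic hn3 (serp i j hj0) hinj hsurj hadj hwrap
end

section
/- Let m ≥ 2 and n ≥ 1 be integers, set i = 4m and j = 2n, and let 0 ≤ k ≤ i−1. Let G be the simple graph on the vertex set (Fin j) × (ZMod i) whose edges are all edges of the twisted toroidal grid T(i,j,k) together with: the diagonal edges {(b,a+1),(b+1,a)} for all a ∈ ZMod i with a ≡ 0 or 1 (mod 4) and all even b with 0 ≤ b ≤ j−2; the diagonal edges {(b,a),(b+1,a+1)} for all a ∈ ZMod i with a ≡ 2 or 3 (mod 4) and all odd b with 0 ≤ b ≤ j−2; and the wrap-around diagonal edges {(j−1,a),(0,a+1+k)} for all a ∈ ZMod i with a ≡ 2 or 3 (mod 4). Then G has a Hamiltonian cycle. -/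
open SimpleGraph

def walkOfFn {V : Type*} (G : SimpleGraph V) (f : ℕ → V) :
    ∀ (n : ℕ), (∀ t, t < n → G.Adj (f t) (f (t + 1))) → G.Walk (f 0) (f n)
  | 0, _ => SimpleGraph.Walk.nil
  | n + 1, h =>
    (walkOfFn G f n fun t ht => h t (Nat.lt_succ_of_lt ht)).concat (h n (Nat.lt_succ_self n))

lemma walkOfFn_support {V : Type*} (G : SimpleGraph V) (f : ℕ → V) :
    ∀ (n : ℕ) (h : ∀ t, t < n → G.Adj (f t) (f (t + 1))),
      (walkOfFn G f n h).support = (List.range (n + 1)).map f := by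
  intro n
  induction n with
  | zero => intro h; simp [walkOfFn, List.range_succ]
  | succ n ih =>
    intro h
    rw [walkOfFn, Walk.support_concat, ih, List.range_succ (n := n + 1)]
    simp

lemma walkOfFn_edges {V : Type*} (G : SimpleGraph V) (f : ℕ → V) :
    ∀ (n : ℕ) (h : ∀ t, t < n → G.Adj (f t) (f (t + 1))),
      (walkOfFn G f n h).edges = (List.range n).map (fun t => s(f t, f (t + 1))) := by
  intro n
  induction n with
  | zero => intro h; simp [walkOfFn]
  | succ n ih =>
    intro h
    rw [walkOfFn, Walk.edges_concat, ih, List.range_succ (n := n)]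
    simp

lemma exists_hamiltonianCycle_of_fn {V : Type*} [DecidableEq V] {G : SimpleGraph V}
    (f : ℕ → V) (N : ℕ) (hN : 3 ≤ N)
    (hinj : ∀ s t, s < N → t < N → f s = f t → s = t)
    (hsurj : ∀ v, ∃ t, t < N ∧ f t = v)
    (hadj : ∀ t, t + 1 < N → G.Adj (f t) (f (t + 1)))
    (hwrap : G.Adj (f (N - 1)) (f 0)) :
    ∃ (v : V) (c : G.Walk v v), c.IsHamiltonianCycle := by
  obtain ⟨n, rfl⟩ : ∃ n, N = n + 3 := ⟨N - 3, by omega⟩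
  have hwrap' : G.Adj (f (n + 2)) (f 0) := by
    have : n + 3 - 1 = n + 2 := by omega
    rwa [this] at hwrap
  have hg : ∀ t, t < n + 1 → G.Adj ((fun t => f (t + 1)) t) ((fun t => f (t + 1)) (t + 1)) :=
    fun t ht => hadj (t + 1) (by omega)
  let q0 : G.Walk (f 1) (f (n + 2)) := walkOfFn G (fun t => f (t + 1)) (n + 1) hg
  let q : G.Walk (f 1) (f 0) := q0.concat hwrap'
  have h01 : G.Adj (f 0) (f 1) := hadj 0 (by omega)
  let c : G.Walk (f 0) (f 0) := Walk.cons h01 q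
  refine ⟨f 0, c, ?_⟩
  set L : List ℕ := ((List.range (n + 2)).map (· + 1)).concat 0 with hL
  have hmemL : ∀ x ∈ L, x < n + 3 := by
    intro x hx
    rw [hL, List.concat_eq_append, List.mem_append] at hx
    rcases hx with hx | hx
    · simp only [List.mem_map, List.mem_range] at hx; omega
    · simp at hx; omega
  have hLnd : L.Nodup := by
    rw [hL, List.concat_eq_append]
    refine List.Nodup.append ?_ (List.nodup_singleton 0) ?_
    · exact (List.nodup_range (n := n + 2)).map (fun a b h => by omega)
    · intro x hx hx0
      simp only [List.mem_singleton] at hx0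
      subst hx0
      simp only [List.mem_map, List.mem_range] at hx
      omega
  have hsupq : q.support = L.map f := by
    show (q0.concat hwrap').support = _
    rw [Walk.support_concat, walkOfFn_support, hL]
    simp [List.concat_eq_append]
  have hndsup : (L.map f).Nodup :=
    hLnd.map_on (fun x hx y hy hxy => hinj x y (hmemL x hx) (hmemL y hy) hxy)
  have hpath : q.IsPath := Walk.IsPath.mk' (by rw [hsupq]; exact hndsup)
  have hedges : q.edges
      = ((List.range (n + 1)).map (fun t => s(f (t + 1), f (t + 1 + 1)))).concat
        s(f (n + 2), f 0) := by
    show (q0.concat hwrap').edges = _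
    rw [Walk.edges_concat, walkOfFn_edges]
  have hedge : s(f 0, f 1) ∉ q.edges := by
    rw [hedges, List.concat_eq_append]
    intro hmem
    rw [List.mem_append] at hmem
    rcases hmem with hmem | hmem
    · simp only [List.mem_map, List.mem_range] at hmem
      obtain ⟨t, ht, hst⟩ := hmem
      rw [Sym2.eq_iff] at hst
      rcases hst with ⟨h1, h2⟩ | ⟨h1, h2⟩
      · have := hinj (t + 1) 0 (by omega) (by omega) h1; omega
      · have := hinj (t + 1 + 1) 0 (by omega) (by omega) h2; omega
    · simp only [List.mem_singleton] at hmem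
      rw [Sym2.eq_iff] at hmem
      rcases hmem with ⟨h1, h2⟩ | ⟨h1, h2⟩
      · have := hinj 1 0 (by omega) (by omega) h2; omega
      · have := hinj 1 (n + 2) (by omega) (by omega) h2; omega
  have hcyc : c.IsCycle := (Walk.cons_isCycle_iff q h01).mpr ⟨hpath, hedge⟩
  rw [Walk.isHamiltonianCycle_iff_isCycle_and_support_count_tail_eq_one]
  refine ⟨hcyc, fun a => ?_⟩
  have hc : c.support = f 0 :: q.support := by
    show (Walk.cons h01 q).support = _
    rw [Walk.support_cons]
  rw [hc, List.tail_cons, hsupq]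
  obtain ⟨t, ht, rfl⟩ := hsurj a
  refine List.count_eq_one_of_mem hndsup (List.mem_map_of_mem (f := f) ?_)
  rw [hL, List.concat_eq_append, List.mem_append]
  rcases Nat.eq_zero_or_pos t with rfl | htpos
  · right; simp
  · left
    simp only [List.mem_map, List.mem_range]
    exact ⟨t - 1, by omega, by omega⟩

/-- The boustrophedon enumeration of the `j × i` grid. -/
def snakeFn (i j t : ℕ) : ℕ × ℕ :=
  if t < i then (0, t)
  else if t < i + (j - 1) * (i - 1) then
    ((t - i) / (i - 1) + 1,
      if ((t - i) / (i - 1) + 1) % 2 = 1 then i - 1 - (t - i) % (i - 1)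
      else (t - i) % (i - 1) + 1)
  else (j - 1 - (t - (i + (j - 1) * (i - 1))), 0)

lemma grid_count {i j : ℕ} (hi : 3 ≤ i) (hj : 2 ≤ j) :
    i + (j - 1) * (i - 1) + (j - 1) = i * j := by
  have h1 : (1 : ℕ) ≤ i := by omega
  have h2 : (1 : ℕ) ≤ j := by omega
  zify [h1, h2]
  ring

lemma mid_lt {i j r p : ℕ} (hi : 3 ≤ i) (hr : 1 ≤ r) (hrj : r ≤ j - 1) (hp : p < i - 1) :
    i + (i - 1) * (r - 1) + p < i + (j - 1) * (i - 1) := by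
  have e1 : (i - 1) * (r - 1) + (i - 1) = (i - 1) * r := by
    rw [← Nat.mul_succ]
    congr 1
    omega
  have e2 : (i - 1) * r ≤ (i - 1) * (j - 1) := Nat.mul_le_mul_left _ hrj
  have e3 : (j - 1) * (i - 1) = (i - 1) * (j - 1) := Nat.mul_comm _ _
  omega

lemma snakeFn_mid {i j r p t : ℕ} (hi : 3 ≤ i) (hr : 1 ≤ r) (hrj : r ≤ j - 1) (hp : p < i - 1)
    (ht : t = i + (i - 1) * (r - 1) + p) :
    snakeFn i j t = (r, if r % 2 = 1 then i - 1 - p else p + 1) := by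
  subst ht
  have hlt := mid_lt (j := j) hi hr hrj hp
  unfold snakeFn
  rw [if_neg (by omega), if_pos hlt]
  have hdm : i + (i - 1) * (r - 1) + p - i = (i - 1) * (r - 1) + p := by omega
  rw [hdm, Nat.mul_add_div (by omega), Nat.mul_add_mod, Nat.div_eq_of_lt hp,
    Nat.mod_eq_of_lt hp]
  rw [show r - 1 + 0 + 1 = r by omega]

lemma snakeFn_third {i j s t : ℕ} (hi : 3 ≤ i) (hs : s < j - 1)
    (ht : t = i + (j - 1) * (i - 1) + s) :
    snakeFn i j t = (j - 1 - s, 0) := by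
  subst ht
  unfold snakeFn
  rw [if_neg (by omega), if_neg (by omega)]
  congr 1
  omega

lemma snakeFn_spec {i j t : ℕ} (hi : 3 ≤ i) (hj : 2 ≤ j) (ht : t < i * j) :
    (t < i ∧ snakeFn i j t = (0, t)) ∨
    (∃ r p, 1 ≤ r ∧ r ≤ j - 1 ∧ p < i - 1 ∧ t = i + (i - 1) * (r - 1) + p ∧
      snakeFn i j t = (r, if r % 2 = 1 then i - 1 - p else p + 1)) ∨
    (∃ s, s < j - 1 ∧ t = i + (j - 1) * (i - 1) + s ∧ snakeFn i j t = (j - 1 - s, 0)) := by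
  have hB := grid_count hi hj
  by_cases h1 : t < i
  · exact Or.inl ⟨h1, by unfold snakeFn; rw [if_pos h1]⟩
  · by_cases h2 : t < i + (j - 1) * (i - 1)
    · refine Or.inr (Or.inl ?_)
      obtain ⟨d, m, hmlt, hdm⟩ : ∃ d m, m < i - 1 ∧ t - i = (i - 1) * d + m :=
        ⟨(t - i) / (i - 1), (t - i) % (i - 1), Nat.mod_lt _ (by omega),
          (Nat.div_add_mod _ _).symm⟩
      have hdlt : d < j - 1 := by
        by_contra hcon
        have h5 : (i - 1) * (j - 1) ≤ (i - 1) * d := Nat.mul_le_mul_left _ (by omega)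
        have e3 : (j - 1) * (i - 1) = (i - 1) * (j - 1) := Nat.mul_comm _ _
        omega
      have e : (i - 1) * (d + 1 - 1) = (i - 1) * d := by norm_num
      have ht2 : t = i + (i - 1) * (d + 1 - 1) + m := by omega
      exact ⟨d + 1, m, by omega, by omega, hmlt, ht2,
        snakeFn_mid hi (by omega) (by omega) hmlt ht2⟩
    · refine Or.inr (Or.inr ⟨t - (i + (j - 1) * (i - 1)), by omega, by omega, ?_⟩)
      exact snakeFn_third hi (by omega) (by omega)

lemma snakeFn_lt {i j t : ℕ} (hi : 3 ≤ i) (hj : 2 ≤ j) (ht : t < i * j) :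
    (snakeFn i j t).1 < j ∧ (snakeFn i j t).2 < i := by
  rcases snakeFn_spec hi hj ht with ⟨h, hs⟩ | ⟨r, p, hr, hrj, hp, _, hs⟩ | ⟨s, hsj, _, hs⟩ <;>
    rw [hs]
  · exact ⟨by omega, by omega⟩
  · constructor
    · simp only; omega
    · simp only
      split <;> omega
  · exact ⟨by omega, by omega⟩

lemma snakeFn_injOn {i j : ℕ} (hi : 3 ≤ i) (hj : 2 ≤ j) {s t : ℕ}
    (hs : s < i * j) (ht : t < i * j) (h : snakeFn i j s = snakeFn i j t) : s = t := by
  rcases snakeFn_spec hi hj hs with ⟨hs1, hseq⟩ | ⟨r, p, hr, hrj, hp, hsdec, hseq⟩ |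
      ⟨a, haj, hsdec, hseq⟩ <;>
    rcases snakeFn_spec hi hj ht with ⟨ht1, hteq⟩ | ⟨r', p', hr', hrj', hp', htdec, hteq⟩ |
      ⟨a', haj', htdec, hteq⟩ <;>
    rw [hseq, hteq] at h <;>
    rw [Prod.mk.injEq] at h <;>
    obtain ⟨h1, h2⟩ := h
  · omega
  · omega
  · omega
  · omega
  · subst h1; split_ifs at h2 <;> omega
  · split_ifs at h2 <;> omega
  · omega
  · split_ifs at h2 <;> omega
  · omega

lemma snakeFn_surj {i j : ℕ} (hi : 3 ≤ i) (hj : 2 ≤ j) {b c : ℕ} (hb : b < j) (hc : c < i) :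
    ∃ t, t < i * j ∧ snakeFn i j t = (b, c) := by
  have hB := grid_count hi hj
  rcases Nat.eq_zero_or_pos b with rfl | hbpos
  · exact ⟨c, by omega, by unfold snakeFn; rw [if_pos hc]⟩
  rcases Nat.eq_zero_or_pos c with rfl | hcpos
  · refine ⟨i + (j - 1) * (i - 1) + (j - 1 - b), by omega, ?_⟩
    rw [snakeFn_third hi (by omega) rfl]
    have e : j - 1 - (j - 1 - b) = b := by omega
    rw [e]
  · have hplt : (if b % 2 = 1 then i - 1 - c else c - 1) < i - 1 := by split_ifs <;> omega
    have hlt := mid_lt (j := j) hi hbpos (by omega) hplt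
    refine ⟨i + (i - 1) * (b - 1) + (if b % 2 = 1 then i - 1 - c else c - 1), by omega, ?_⟩
    rw [snakeFn_mid hi hbpos (by omega) hplt rfl, Prod.mk.injEq]
    refine ⟨rfl, ?_⟩
    split_ifs with hb2 <;> omega

lemma snakeFn_zero {i j : ℕ} (hi : 0 < i) : snakeFn i j 0 = (0, 0) := by
  unfold snakeFn
  rw [if_pos hi]

lemma snakeFn_last {i j : ℕ} (hi : 3 ≤ i) (hj : 2 ≤ j) : snakeFn i j (i * j - 1) = (1, 0) := by
  have hB := grid_count hi hj
  rw [snakeFn_third hi (s := j - 2) (by omega) (by omega)]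
  have e : j - 1 - (j - 2) = 1 := by omega
  rw [e]

lemma snakeFn_step {i j t : ℕ} (hi : 3 ≤ i) (hj : 2 ≤ j) (hje : j % 2 = 0)
    (ht : t + 1 < i * j) :
    ((snakeFn i j t).1 = (snakeFn i j (t + 1)).1 ∧
      ((snakeFn i j (t + 1)).2 = (snakeFn i j t).2 + 1 ∨
        (snakeFn i j t).2 = (snakeFn i j (t + 1)).2 + 1)) ∨
    ((snakeFn i j t).2 = (snakeFn i j (t + 1)).2 ∧
      ((snakeFn i j (t + 1)).1 = (snakeFn i j t).1 + 1 ∨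
        (snakeFn i j t).1 = (snakeFn i j (t + 1)).1 + 1)) := by
  have hB := grid_count hi hj
  by_cases h1 : t + 1 < i
  · have e1 : snakeFn i j t = (0, t) := by unfold snakeFn; rw [if_pos (by omega)]
    have e2 : snakeFn i j (t + 1) = (0, t + 1) := by unfold snakeFn; rw [if_pos h1]
    rw [e1, e2]
    exact Or.inl ⟨rfl, Or.inl rfl⟩
  by_cases h2 : t + 1 = i
  · have e1 : snakeFn i j t = (0, t) := by unfold snakeFn; rw [if_pos (by omega)]
    have e0 : (i - 1) * (1 - 1) = 0 := by norm_num
    have e2 : snakeFn i j (t + 1) = (1, if 1 % 2 = 1 then i - 1 - 0 else 0 + 1) :=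
      snakeFn_mid hi le_rfl (by omega) (by omega) (by omega)
    rw [e1, e2, if_pos (by norm_num)]
    exact Or.inr ⟨show t = i - 1 - 0 by omega, Or.inl (show 1 = 0 + 1 by omega)⟩
  by_cases h3 : t + 1 < i + (j - 1) * (i - 1)
  · have hti : i ≤ t := by omega
    obtain ⟨r, p, hr, hrj, hp, hdec, heq⟩ :
        ∃ r p, 1 ≤ r ∧ r ≤ j - 1 ∧ p < i - 1 ∧ t = i + (i - 1) * (r - 1) + p ∧
          snakeFn i j t = (r, if r % 2 = 1 then i - 1 - p else p + 1) := by
      rcases snakeFn_spec hi hj (show t < i * j by omega) with ⟨h', _⟩ | hh | ⟨a, ha, hd, _⟩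
      · omega
      · exact hh
      · omega
    by_cases hpi : p + 1 < i - 1
    · have heq2 : snakeFn i j (t + 1)
          = (r, if r % 2 = 1 then i - 1 - (p + 1) else (p + 1) + 1) :=
        snakeFn_mid hi hr hrj hpi (by omega)
      rw [heq, heq2]
      by_cases hr2 : r % 2 = 1
      · rw [if_pos hr2, if_pos hr2]
        exact Or.inl ⟨rfl, Or.inr (show i - 1 - p = i - 1 - (p + 1) + 1 by omega)⟩
      · rw [if_neg hr2, if_neg hr2]
        exact Or.inl ⟨rfl, Or.inl rfl⟩
    · have e1 : (i - 1) * (r - 1) + (i - 1) = (i - 1) * r := by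
        rw [← Nat.mul_succ]; congr 1; omega
      have e3 : (j - 1) * (i - 1) = (i - 1) * (j - 1) := Nat.mul_comm _ _
      have hrlt : r < j - 1 := by
        refine Nat.lt_of_mul_lt_mul_left (a := i - 1) ?_
        have e5 : (i - 1) * (j - 1) = (j - 1) * (i - 1) := Nat.mul_comm _ _
        omega
      have e4 : (i - 1) * (r + 1 - 1) = (i - 1) * r := by congr 1
      have heq2 : snakeFn i j (t + 1)
          = (r + 1, if (r + 1) % 2 = 1 then i - 1 - 0 else 0 + 1) :=
        snakeFn_mid hi (by omega) (by omega) (by omega) (by omega)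
      rw [heq, heq2]
      by_cases hr2 : r % 2 = 1
      · rw [if_pos hr2, if_neg (by omega)]
        exact Or.inr ⟨show i - 1 - p = 0 + 1 by omega, Or.inl rfl⟩
      · rw [if_neg hr2, if_pos (by omega)]
        exact Or.inr ⟨show p + 1 = i - 1 - 0 by omega, Or.inl rfl⟩
  by_cases h4 : t + 1 = i + (j - 1) * (i - 1)
  · have e1 : (i - 1) * (j - 1 - 1) + (i - 1) = (i - 1) * (j - 1) := by
      rw [← Nat.mul_succ]; congr 1; omega
    have e3 : (j - 1) * (i - 1) = (i - 1) * (j - 1) := Nat.mul_comm _ _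
    have heq : snakeFn i j t
        = (j - 1, if (j - 1) % 2 = 1 then i - 1 - (i - 2) else i - 2 + 1) :=
      snakeFn_mid hi (by omega) le_rfl (by omega) (by omega)
    have heq2 : snakeFn i j (t + 1) = (j - 1 - 0, 0) := snakeFn_third hi (by omega) (by omega)
    rw [heq, heq2, if_pos (show (j - 1) % 2 = 1 by omega)]
    exact Or.inl ⟨show j - 1 = j - 1 - 0 by omega,
      Or.inr (show i - 1 - (i - 2) = 0 + 1 by omega)⟩
  · have heq : snakeFn i j t = (j - 1 - (t - (i + (j - 1) * (i - 1))), 0) :=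
      snakeFn_third hi (by omega) (by omega)
    have heq2 : snakeFn i j (t + 1) = (j - 1 - (t + 1 - (i + (j - 1) * (i - 1))), 0) :=
      snakeFn_third hi (by omega) (by omega)
    rw [heq, heq2]
    refine Or.inr ⟨rfl, Or.inr ?_⟩
    show j - 1 - (t - (i + (j - 1) * (i - 1)))
      = j - 1 - (t + 1 - (i + (j - 1) * (i - 1))) + 1
    omega




lemma toVert_grid_adj {i j k : ℕ} (hi : 3 ≤ i) (hj : 2 ≤ j) {u v : ℕ × ℕ}
    (hu1 : u.1 < j) (hv1 : v.1 < j) (hu2 : u.2 < i) (hv2 : v.2 < i)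
    (h : (u.1 = v.1 ∧ (v.2 = u.2 + 1 ∨ u.2 = v.2 + 1)) ∨
         (u.2 = v.2 ∧ (v.1 = u.1 + 1 ∨ u.1 = v.1 + 1))) :
    (twistedGrid i j k).Adj
      (⟨u.1 % j, Nat.mod_lt _ (by omega)⟩, (u.2 : ZMod i))
      (⟨v.1 % j, Nat.mod_lt _ (by omega)⟩, (v.2 : ZMod i)) := by
  haveI : NeZero i := ⟨by omega⟩
  have hu1' : u.1 % j = u.1 := Nat.mod_eq_of_lt hu1
  have hv1' : v.1 % j = v.1 := Nat.mod_eq_of_lt hv1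
  rw [twistedGrid, SimpleGraph.fromRel_adj]
  constructor
  · intro hne
    rw [Prod.mk.injEq] at hne
    obtain ⟨hne1, hne2⟩ := hne
    have hf : u.1 = v.1 := by
      have h' := congrArg Fin.val hne1
      simp only at h'
      omega
    have hz : u.2 = v.2 := by
      have h' := congrArg ZMod.val hne2
      rwa [ZMod.val_cast_of_lt hu2, ZMod.val_cast_of_lt hv2] at h'
    omega
  · rcases h with ⟨hrow, hc | hc⟩ | ⟨hcol, hr | hr⟩
    · refine Or.inl (Or.inl ⟨?_, ?_⟩)
      · show (⟨u.1 % j, _⟩ : Fin j) = ⟨v.1 % j, _⟩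
        simp only [Fin.mk.injEq]
        omega
      · show ((v.2 : ℕ) : ZMod i) = (u.2 : ℕ) + 1
        rw [hc]
        push_cast
        ring
    · refine Or.inr (Or.inl ⟨?_, ?_⟩)
      · show (⟨v.1 % j, _⟩ : Fin j) = ⟨u.1 % j, _⟩
        simp only [Fin.mk.injEq]
        omega
      · show ((u.2 : ℕ) : ZMod i) = (v.2 : ℕ) + 1
        rw [hc]
        push_cast
        ring
    · refine Or.inl (Or.inr (Or.inl ⟨?_, ?_⟩))
      · show ((⟨v.1 % j, _⟩ : Fin j) : ℕ) = ((⟨u.1 % j, _⟩ : Fin j) : ℕ) + 1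
        simp only
        omega
      · show ((v.2 : ℕ) : ZMod i) = (u.2 : ℕ)
        rw [hcol]
    · refine Or.inr (Or.inr (Or.inl ⟨?_, ?_⟩))
      · show ((⟨u.1 % j, _⟩ : Fin j) : ℕ) = ((⟨v.1 % j, _⟩ : Fin j) : ℕ) + 1
        simp only
        omega
      · show ((u.2 : ℕ) : ZMod i) = (v.2 : ℕ)
        rw [hcol]

/-- The edge graph of the doubly semi-equivelar map of type `[3³.4²:3².4.3.4]₂` in its
`M(i,j,k)`-representation (`i = 4m`, `j = 2n`): the twisted toroidal grid together with
the diagonal edges `{(b,a+1),(b+1,a)}` for `a ≡ 0, 1 (mod 4)` and `b` even, the diagonal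
edges `{(b,a),(b+1,a+1)}` for `a ≡ 2, 3 (mod 4)` and `b` odd, and the wrap-around
diagonals `{(j-1,a),(0,a+1+k)}` for `a ≡ 2, 3 (mod 4)`, is Hamiltonian. -/
theorem dsem_3_3_4_2_3_2_4_3_4_2_hamiltonian (m n i j k : ℕ) (hm : 2 ≤ m) (hn : 1 ≤ n)
    (hi : i = 4 * m) (hj : j = 2 * n) (hk : k ≤ i - 1) :
    ∃ (v : Fin j × ZMod i)
      (c : (twistedGrid i j k ⊔ SimpleGraph.fromRel (fun p q : Fin j × ZMod i =>
        ((p.1 : ℕ) % 2 = 0 ∧ (q.1 : ℕ) = (p.1 : ℕ) + 1 ∧ p.2 = q.2 + 1 ∧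
          (q.2.val % 4 = 0 ∨ q.2.val % 4 = 1)) ∨
        ((p.1 : ℕ) % 2 = 1 ∧ (q.1 : ℕ) = (p.1 : ℕ) + 1 ∧ q.2 = p.2 + 1 ∧
          (p.2.val % 4 = 2 ∨ p.2.val % 4 = 3)) ∨
        ((p.1 : ℕ) = j - 1 ∧ (q.1 : ℕ) = 0 ∧ q.2 = p.2 + 1 + (k : ZMod i) ∧
          (p.2.val % 4 = 2 ∨ p.2.val % 4 = 3)))).Walk v v),
      c.IsHamiltonianCycle := by
  classical
  have hi3 : 3 ≤ i := by omega
  have hj2 : 2 ≤ j := by omega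
  have hje : j % 2 = 0 := by omega
  have hj0 : 0 < j := by omega
  haveI : NeZero i := ⟨by omega⟩
  have hN : 3 ≤ i * j := by
    have h5 : i * 1 ≤ i * j := Nat.mul_le_mul_left i (by omega)
    omega
  refine exists_hamiltonianCycle_of_fn
    (fun t => (⟨(snakeFn i j t).1 % j, Nat.mod_lt _ hj0⟩, ((snakeFn i j t).2 : ZMod i)))
    (i * j) hN ?_ ?_ ?_ ?_
  · intro s t hs ht h
    have hs' := snakeFn_lt hi3 hj2 hs
    have ht' := snakeFn_lt hi3 hj2 ht
    simp only [Prod.mk.injEq] at h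
    obtain ⟨h1, h2⟩ := h
    refine snakeFn_injOn hi3 hj2 hs ht ?_
    have hf : (snakeFn i j s).1 = (snakeFn i j t).1 := by
      simp only [Fin.mk.injEq] at h1
      rwa [Nat.mod_eq_of_lt hs'.1, Nat.mod_eq_of_lt ht'.1] at h1
    have hz : (snakeFn i j s).2 = (snakeFn i j t).2 := by
      have h' := congrArg ZMod.val h2
      rwa [ZMod.val_cast_of_lt hs'.2, ZMod.val_cast_of_lt ht'.2] at h'
    exact Prod.ext hf hz
  · rintro ⟨b, a⟩
    obtain ⟨t, htlt, hst⟩ := snakeFn_surj hi3 hj2 b.isLt (ZMod.val_lt a)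
    refine ⟨t, htlt, ?_⟩
    have h1 : (snakeFn i j t).1 = (b : ℕ) := by rw [hst]
    have h2 : (snakeFn i j t).2 = a.val := by rw [hst]
    refine Prod.ext ?_ ?_
    · show (⟨(snakeFn i j t).1 % j, Nat.mod_lt _ hj0⟩ : Fin j) = b
      apply Fin.val_injective
      show (snakeFn i j t).1 % j = (b : ℕ)
      rw [h1]
      exact Nat.mod_eq_of_lt b.isLt
    · show ((snakeFn i j t).2 : ZMod i) = a
      rw [h2]
      exact ZMod.natCast_rightInverse a
  · intro t ht
    have hstep := snakeFn_step hi3 hj2 hje ht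
    have hu := snakeFn_lt hi3 hj2 (show t < i * j by omega)
    have hv := snakeFn_lt hi3 hj2 ht
    exact Or.inl (toVert_grid_adj hi3 hj2 hu.1 hv.1 hu.2 hv.2 hstep)
  · have h1 : snakeFn i j (i * j - 1) = (1, 0) := snakeFn_last hi3 hj2
    have h2 : snakeFn i j 0 = (0, 0) := snakeFn_zero (by omega)
    simp only [h1, h2]
    exact Or.inl (toVert_grid_adj (k := k) (u := (1, 0)) (v := (0, 0)) hi3 hj2 (by omega)
      (by omega) (by omega) (by omega) (Or.inr ⟨rfl, Or.inr rfl⟩))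
end

section
/- Let i ≥ 6 be an even integer and let 0 ≤ k ≤ i−1. In the graph H(i,1,k) (with y-vertices y(a) for a ∈ ZMod i forming a cycle, and x-vertices x(t) for t ∈ Fin (i/2) with x(t) adjacent to y(2t) and y(2t+1)), the closed walk obtained by concatenating, for t = 0, 1, …, i/2 − 1, the segment y(2t), x(t), y(2t+1) followed by the edge from y(2t+1) to y(2t+2) (indices modulo i), is a Hamiltonian cycle. -/
/-- The edge graph `H(i,j,k)` of the doubly semi-equivelar map of type `[3².6²:3.6.3.6]`
in its `M(i,j,k)`-representation.  The `y`-vertices `Sum.inl (s, a)` (with `s : Fin j`,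
`a : ZMod i`) form `j` horizontal cycles of length `i`; the `x`-vertices `Sum.inr (s, t)`
(with `t : Fin (i/2)`) sit between consecutive horizontal cycles: `x(s,t)` is adjacent
to `y(s,2t)`, `y(s,2t+1)`, `y(s+1,2t)`, `y(s+1,2t+1)` (for `s < j-1`), and `x(j-1,t)` is
adjacent to `y(0,2t+k)` and `y(0,2t+1+k)`. -/
def Hgraph (i j k : ℕ) : SimpleGraph ((Fin j × ZMod i) ⊕ (Fin j × Fin (i / 2))) :=
  SimpleGraph.fromRel (fun p q =>
    match p, q with
    | Sum.inl (s, a), Sum.inl (s', a') => s = s' ∧ a' = a + 1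
    | Sum.inr (s, t), Sum.inl (s', a) =>
        (s = s' ∧ (a = ((2 * (t : ℕ) : ℕ) : ZMod i) ∨ a = ((2 * (t : ℕ) + 1 : ℕ) : ZMod i))) ∨
        ((s' : ℕ) = (s : ℕ) + 1 ∧
          (a = ((2 * (t : ℕ) : ℕ) : ZMod i) ∨ a = ((2 * (t : ℕ) + 1 : ℕ) : ZMod i))) ∨
        ((s : ℕ) = j - 1 ∧ (s' : ℕ) = 0 ∧
          (a = ((2 * (t : ℕ) : ℕ) : ZMod i) + (k : ZMod i) ∨
           a = ((2 * (t : ℕ) + 1 : ℕ) : ZMod i) + (k : ZMod i)))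
    | _, _ => False)

namespace HgraphAux

abbrev HV (i : ℕ) := (Fin 1 × ZMod i) ⊕ (Fin 1 × Fin (i / 2))

def yv (i : ℕ) (a : ZMod i) : HV i := Sum.inl (0, a)
def xv (i : ℕ) (t : Fin (i / 2)) : HV i := Sum.inr (0, t)

variable {i k : ℕ}

lemma one_ne_zero' (hi : 6 ≤ i) : (1 : ZMod i) ≠ 0 := by
  haveI : Fact (1 < i) := ⟨by omega⟩
  exact one_ne_zero

lemma yinj (hi : 6 ≤ i) {a b : ℕ} (ha : a < i) (hb : b < i)
    (hab : (a : ZMod i) = (b : ZMod i)) : a = b := by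
  haveI : NeZero i := ⟨by omega⟩
  rw [← ZMod.val_cast_of_lt ha, ← ZMod.val_cast_of_lt hb, hab]

lemma ycast_inj (hi : 6 ≤ i) {a b : ℕ} (ha : a ≤ i) (hb : b ≤ i)
    (hab : (a : ZMod i) = (b : ZMod i)) : a = b ∨ (a = 0 ∧ b = i) ∨ (a = i ∧ b = 0) := by
  haveI : NeZero i := ⟨by omega⟩
  have hmod : a % i = b % i := by
    have := congrArg ZMod.val hab
    rwa [ZMod.val_natCast, ZMod.val_natCast] at this
  rcases eq_or_lt_of_le ha with rfl | ha' <;> rcases eq_or_lt_of_le hb with rfl | hb'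
  · left; rfl
  · rw [Nat.mod_self, Nat.mod_eq_of_lt hb'] at hmod; omega
  · rw [Nat.mod_self, Nat.mod_eq_of_lt ha'] at hmod; omega
  · rw [Nat.mod_eq_of_lt ha', Nat.mod_eq_of_lt hb'] at hmod; omega

lemma adj_yx (t : Fin (i / 2)) :
    (Hgraph i 1 k).Adj (yv i ((2 * (t : ℕ) : ℕ) : ZMod i)) (xv i t) :=
  ⟨by simp [yv, xv], Or.inr (Or.inl ⟨rfl, Or.inl rfl⟩)⟩

lemma adj_xy (t : Fin (i / 2)) :
    (Hgraph i 1 k).Adj (xv i t) (yv i ((2 * (t : ℕ) + 1 : ℕ) : ZMod i)) :=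
  ⟨by simp [yv, xv], Or.inl (Or.inl ⟨rfl, Or.inr rfl⟩)⟩

lemma adj_yy (hi : 6 ≤ i) (a : ZMod i) :
    (Hgraph i 1 k).Adj (yv i a) (yv i (a + 1)) := by
  refine ⟨?_, Or.inl ⟨rfl, rfl⟩⟩
  simp only [yv, ne_eq, Sum.inl.injEq, Prod.mk.injEq, true_and]
  exact fun h => one_ne_zero' hi (by linear_combination -h)

lemma adj_yy' (hi : 6 ≤ i) {a b : ℕ} (hab : b = a + 1) :
    (Hgraph i 1 k).Adj (yv i (a : ZMod i)) (yv i (b : ZMod i)) := by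
  have : ((b : ℕ) : ZMod i) = (a : ZMod i) + 1 := by subst hab; push_cast; ring
  rw [this]; exact adj_yy hi a

end HgraphAux

namespace HgraphAux

open List

def Gseg (i : ℕ) (t : Fin (i / 2)) : List (HV i) :=
  [yv i ((2 * (t : ℕ) : ℕ) : ZMod i), xv i t, yv i ((2 * (t : ℕ) + 1 : ℕ) : ZMod i)]

def Eseg (i : ℕ) (t : Fin (i / 2)) : List (Sym2 (HV i)) :=
  [s(yv i ((2 * (t : ℕ) : ℕ) : ZMod i), xv i t),
   s(xv i t, yv i ((2 * (t : ℕ) + 1 : ℕ) : ZMod i)),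
   s(yv i ((2 * (t : ℕ) + 1 : ℕ) : ZMod i), yv i ((2 * ((t : ℕ) + 1) : ℕ) : ZMod i))]

variable {i k : ℕ}

lemma walk_exists (hi : 6 ≤ i) (h2 : 2 * (i / 2) = i) :
    ∀ r, r ≤ i / 2 →
      ∃ w : (Hgraph i 1 k).Walk (yv i ((2 * (i / 2 - r) : ℕ) : ZMod i)) (yv i (0 : ZMod i)),
        w.support = ((finRange (i / 2)).drop (i / 2 - r)).flatMap (Gseg i) ++ [yv i 0] ∧
        w.edges = ((finRange (i / 2)).drop (i / 2 - r)).flatMap (Eseg i) := by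
  intro r
  induction r with
  | zero =>
    intro _
    have he : yv i ((2 * (i / 2 - 0) : ℕ) : ZMod i) = yv i (0 : ZMod i) := by
      rw [Nat.sub_zero, h2]; simp [yv]
    refine ⟨(SimpleGraph.Walk.nil).copy he.symm rfl, ?_, ?_⟩
    · rw [SimpleGraph.Walk.support_copy]
      have : List.drop (i / 2 - 0) (finRange (i / 2)) = [] := by simp
      rw [this]; simp
    · rw [SimpleGraph.Walk.edges_copy]
      have : List.drop (i / 2 - 0) (finRange (i / 2)) = [] := by simp
      rw [this]; simp
  | succ r ih =>
    intro hr
    obtain ⟨w, hs, hed⟩ := ih (by omega)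
    set m : ℕ := i / 2 - (r + 1) with hm
    have hmlt : m < i / 2 := by omega
    have hnext : i / 2 - r = m + 1 := by omega
    set t : Fin (i / 2) := ⟨m, hmlt⟩ with ht
    have a1 : (Hgraph i 1 k).Adj (yv i ((2 * m : ℕ) : ZMod i)) (xv i t) := adj_yx t
    have a2 : (Hgraph i 1 k).Adj (xv i t) (yv i ((2 * m + 1 : ℕ) : ZMod i)) := adj_xy t
    have a3 : (Hgraph i 1 k).Adj (yv i ((2 * m + 1 : ℕ) : ZMod i))
        (yv i ((2 * (i / 2 - r) : ℕ) : ZMod i)) := adj_yy' hi (by omega)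
    refine ⟨SimpleGraph.Walk.cons a1 (SimpleGraph.Walk.cons a2 (SimpleGraph.Walk.cons a3 w)),
      ?_, ?_⟩
    · rw [SimpleGraph.Walk.support_cons, SimpleGraph.Walk.support_cons,
        SimpleGraph.Walk.support_cons, hs]
      have hd : List.drop m (finRange (i / 2)) =
          t :: List.drop (m + 1) (finRange (i / 2)) := by
        rw [List.drop_eq_getElem_cons (by simp [hmlt])]
        simp [ht]
      rw [hd, hnext]
      simp [Gseg, ht]
    · rw [SimpleGraph.Walk.edges_cons, SimpleGraph.Walk.edges_cons,
        SimpleGraph.Walk.edges_cons, hed]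
      have hd : List.drop m (finRange (i / 2)) =
          t :: List.drop (m + 1) (finRange (i / 2)) := by
        rw [List.drop_eq_getElem_cons (by simp [hmlt])]
        simp [ht]
      rw [hd, hnext]
      have : (2 * (m + 1) : ℕ) = 2 * m + 1 + 1 := by omega
      simp [Eseg, ht, this]

end HgraphAux

namespace HgraphAux

open List

variable {i k : ℕ}

lemma Gseg_nodup (hi : 6 ≤ i) (h2 : 2 * (i / 2) = i) (t : Fin (i / 2)) :
    (Gseg i t).Nodup := by
  have ht := t.2
  simp only [Gseg, yv, xv, List.nodup_cons, List.mem_cons, List.mem_singleton,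
    List.nodup_singleton, and_true, not_or, List.not_mem_nil, or_false]
  refine ⟨⟨by simp, ?_⟩, by simp⟩
  intro h
  simp only [Sum.inl.injEq, Prod.mk.injEq, true_and] at h
  rcases ycast_inj hi (by omega) (by omega) h with h' | ⟨h1, h2'⟩ | ⟨h1, h2'⟩ <;> omega

lemma Gseg_disjoint (hi : 6 ≤ i) (h2 : 2 * (i / 2) = i) {t t' : Fin (i / 2)} (h : t ≠ t') :
    List.Disjoint (Gseg i t) (Gseg i t') := by
  have ht := t.2
  have ht' := t'.2
  have hne : (t : ℕ) ≠ (t' : ℕ) := fun hc => h (Fin.ext hc)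
  intro v hv hv'
  simp only [Gseg, List.mem_cons, List.mem_singleton, List.not_mem_nil, or_false] at hv hv'
  rcases hv with rfl | rfl | rfl <;> rcases hv' with hq | hq | hq <;>
    simp only [yv, xv, Sum.inl.injEq, Sum.inr.injEq, Prod.mk.injEq, true_and,
      reduceCtorEq] at hq <;>
    first
      | exact hne (congrArg Fin.val hq)
      | (rcases ycast_inj hi (by omega) (by omega) hq with h' | ⟨h1, h2'⟩ | ⟨h1, h2'⟩ <;> omega)

lemma L_nodup (hi : 6 ≤ i) (h2 : 2 * (i / 2) = i) :
    ((finRange (i / 2)).flatMap (Gseg i)).Nodup := by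
  rw [List.nodup_flatMap]
  refine ⟨fun t _ => Gseg_nodup hi h2 t, ?_⟩
  exact (List.pairwise_lt_finRange (i / 2)).imp fun hlt => Gseg_disjoint hi h2 (Fin.ne_of_lt hlt)

end HgraphAux

namespace HgraphAux

open List

variable {i k : ℕ}

lemma ycast_inj' (hi : 6 ≤ i) {a b : ℕ} (hab : (a : ZMod i) = (b : ZMod i))
    (ha : a ≤ i := by omega) (hb : b ≤ i := by omega) :
    a = b ∨ (a = 0 ∧ b = i) ∨ (a = i ∧ b = 0) :=
  ycast_inj hi ha hb hab

lemma Eseg_nodup (hi : 6 ≤ i) (h2 : 2 * (i / 2) = i) (t : Fin (i / 2)) :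
    (Eseg i t).Nodup := by
  have ht := t.2
  simp only [Eseg, List.nodup_cons, List.mem_cons, List.mem_singleton, List.not_mem_nil,
    or_false, List.nodup_nil, and_true, not_or]
  refine ⟨⟨?_, ?_⟩, ?_, not_false⟩ <;>
    (intro hq; rw [Sym2.eq_iff] at hq; rcases hq with ⟨hA, hB⟩ | ⟨hA, hB⟩) <;>
    (try simp only [yv, xv, Sum.inl.injEq, Sum.inr.injEq, Prod.mk.injEq, true_and,
       reduceCtorEq, Fin.ext_iff] at hA
     all_goals try simp only [yv, xv, Sum.inl.injEq, Sum.inr.injEq, Prod.mk.injEq, true_and,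
       reduceCtorEq, Fin.ext_iff] at hB
     all_goals try rcases ycast_inj' hi hA with h1 | ⟨h1, h1'⟩ | ⟨h1, h1'⟩
     all_goals try omega
     all_goals try rcases ycast_inj' hi hB with h3 | ⟨h3, h3'⟩ | ⟨h3, h3'⟩
     all_goals omega)

lemma Eseg_disjoint (hi : 6 ≤ i) (h2 : 2 * (i / 2) = i) {t t' : Fin (i / 2)} (h : t ≠ t') :
    List.Disjoint (Eseg i t) (Eseg i t') := by
  have ht := t.2
  have ht' := t'.2
  have hne : (t : ℕ) ≠ (t' : ℕ) := fun hc => h (Fin.ext hc)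
  intro e he he'
  simp only [Eseg, List.mem_cons, List.mem_singleton, List.not_mem_nil, or_false] at he he'
  rcases he with rfl | rfl | rfl <;> rcases he' with hq | hq | hq <;>
    (rw [Sym2.eq_iff] at hq; rcases hq with ⟨hA, hB⟩ | ⟨hA, hB⟩) <;>
    (try simp only [yv, xv, Sum.inl.injEq, Sum.inr.injEq, Prod.mk.injEq, true_and,
       reduceCtorEq, Fin.ext_iff] at hA
     all_goals try simp only [yv, xv, Sum.inl.injEq, Sum.inr.injEq, Prod.mk.injEq, true_and,
       reduceCtorEq, Fin.ext_iff] at hB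
     all_goals try (have hc := ycast_inj' hi hA; rcases hc with h1 | ⟨h1, h1'⟩ | ⟨h1, h1'⟩)
     all_goals try omega
     all_goals try rcases ycast_inj' hi hB with h3 | ⟨h3, h3'⟩ | ⟨h3, h3'⟩
     all_goals omega)

lemma E_nodup (hi : 6 ≤ i) (h2 : 2 * (i / 2) = i) :
    ((finRange (i / 2)).flatMap (Eseg i)).Nodup := by
  rw [List.nodup_flatMap]
  refine ⟨fun t _ => Eseg_nodup hi h2 t, ?_⟩
  exact (List.pairwise_lt_finRange (i / 2)).imp fun hlt => Eseg_disjoint hi h2 (Fin.ne_of_lt hlt)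

end HgraphAux

namespace HgraphAux

open List

variable {i k : ℕ}

lemma L_head (h0 : 0 < i / 2) :
    (finRange (i / 2)).flatMap (Gseg i) =
      yv i 0 :: ([xv i ⟨0, h0⟩, yv i ((1 : ℕ) : ZMod i)] ++
        (List.drop 1 (finRange (i / 2))).flatMap (Gseg i)) := by
  have hfr : finRange (i / 2) = ⟨0, h0⟩ :: List.drop 1 (finRange (i / 2)) := by
    conv_lhs => rw [← List.drop_zero (l := finRange (i / 2)),
      List.drop_eq_getElem_cons (by simpa using h0)]
    simp
  rw [hfr]
  simp [Gseg]

lemma mem_T (hi : 6 ≤ i) (h2 : 2 * (i / 2) = i) (v : HV i) :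
    v ∈ ((finRange (i / 2)).flatMap (Gseg i)).tail ++ [yv i 0] := by
  have h0 : 0 < i / 2 := by omega
  have hL := L_head (i := i) h0
  by_cases hv0 : v = yv i 0
  · subst hv0; simp
  · suffices hvL : v ∈ (finRange (i / 2)).flatMap (Gseg i) by
      rw [hL] at hvL ⊢
      rcases List.mem_cons.mp hvL with h | h
      · exact absurd h hv0
      · exact List.mem_append_left _ h
    haveI : NeZero i := ⟨by omega⟩
    rcases v with ⟨s, a⟩ | ⟨s, t⟩
    · have hs : s = 0 := Subsingleton.elim _ _
      subst hs
      have hav : a.val < i := ZMod.val_lt a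
      have hcast : ((a.val : ℕ) : ZMod i) = a := ZMod.natCast_rightInverse a
      rcases Nat.even_or_odd a.val with ⟨m, hm⟩ | ⟨m, hm⟩
      · refine List.mem_flatMap.mpr ⟨⟨m, by omega⟩, List.mem_finRange _, ?_⟩
        have ha : a = ((2 * m : ℕ) : ZMod i) := by rw [← hcast]; exact congrArg _ (by omega : a.val = _)
        subst ha
        simp [Gseg, yv]
      · refine List.mem_flatMap.mpr ⟨⟨m, by omega⟩, List.mem_finRange _, ?_⟩
        have ha : a = ((2 * m + 1 : ℕ) : ZMod i) := by rw [← hcast]; exact congrArg _ (by omega : a.val = _)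
        subst ha
        simp [Gseg, yv]
    · have hs : s = 0 := Subsingleton.elim _ _
      subst hs
      exact List.mem_flatMap.mpr ⟨t, List.mem_finRange _, by simp [Gseg, xv]⟩

lemma T_nodup (hi : 6 ≤ i) (h2 : 2 * (i / 2) = i) :
    (((finRange (i / 2)).flatMap (Gseg i)).tail ++ [yv i 0]).Nodup := by
  have h0 : 0 < i / 2 := by omega
  have hL := L_head (i := i) h0
  have hnd := L_nodup hi h2
  rw [hL] at hnd ⊢
  rw [List.nodup_cons] at hnd
  rw [List.tail_cons]
  rw [List.nodup_append]
  refine ⟨hnd.2, List.nodup_singleton _, ?_⟩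
  intro a ha b hb hab
  rw [List.mem_singleton] at hb
  subst hb
  exact hnd.1 (hab ▸ ha)

end HgraphAux

open HgraphAux List

/-- In `H(i,1,k)` (even `i ≥ 6`, `0 ≤ k ≤ i-1`), the closed walk whose vertex sequence is
obtained by concatenating, for `t = 0, …, i/2 - 1`, the segments `y(2t), x(t), y(2t+1)`
(each followed by the edge to `y(2t+2)`), returning to `y(0)`, is a Hamiltonian cycle
(case `j = 1` of Lemma 3.4.2 of the paper). -/
theorem Hgraph_one_row_explicit_hamiltonian (i k : ℕ) (hi : 6 ≤ i) (hie : Even i)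
    (hk : k ≤ i - 1) :
    ∃ c : (Hgraph i 1 k).Walk (Sum.inl (0, (0 : ZMod i))) (Sum.inl (0, (0 : ZMod i))),
      c.IsHamiltonianCycle ∧
      c.support =
        ((List.finRange (i / 2)).flatMap (fun (t : Fin (i / 2)) =>
          [Sum.inl (0, ((2 * (t : ℕ) : ℕ) : ZMod i)),
           Sum.inr (0, t),
           Sum.inl (0, ((2 * (t : ℕ) + 1 : ℕ) : ZMod i))]) :
          List ((Fin 1 × ZMod i) ⊕ (Fin 1 × Fin (i / 2)))) ++
        [Sum.inl (0, (0 : ZMod i))] := by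
  obtain ⟨n, hn⟩ := hie
  have h2 : 2 * (i / 2) = i := by omega
  have h0 : 0 < i / 2 := by omega
  obtain ⟨w, hs, he⟩ := walk_exists (k := k) hi h2 (i / 2) le_rfl
  have hdrop : List.drop (i / 2 - i / 2) (finRange (i / 2)) = finRange (i / 2) := by simp
  rw [hdrop] at hs he
  have hend : yv i ((2 * (i / 2 - i / 2) : ℕ) : ZMod i) = yv i (0 : ZMod i) := by
    rw [Nat.sub_self]; simp [yv]
  refine ⟨(w.copy hend rfl : (Hgraph i 1 k).Walk (yv i 0) (yv i 0)), ?_, ?_⟩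
  · -- Hamiltonian cycle
    have hsup : (w.copy hend rfl).support =
        (finRange (i / 2)).flatMap (Gseg i) ++ [yv i 0] := by
      rw [SimpleGraph.Walk.support_copy, hs]
    have hL := L_head (i := i) h0
    have htail : (w.copy hend rfl).support.tail =
        ((finRange (i / 2)).flatMap (Gseg i)).tail ++ [yv i 0] := by
      rw [hsup, hL]; rfl
    show (w.copy hend rfl : (Hgraph i 1 k).Walk (yv i 0) (yv i 0)).IsHamiltonianCycle
    rw [SimpleGraph.Walk.isHamiltonianCycle_iff_isCycle_and_support_count_tail_eq_one]
    constructor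
    · rw [SimpleGraph.Walk.isCycle_def]
      refine ⟨?_, ?_, ?_⟩
      · rw [SimpleGraph.Walk.isTrail_def, SimpleGraph.Walk.edges_copy, he]
        exact E_nodup hi h2
      · intro hnil
        have := congrArg SimpleGraph.Walk.support hnil
        rw [hsup, hL] at this
        simp at this
      · rw [htail]
        exact T_nodup hi h2
    · intro v
      rw [htail]
      exact @List.count_eq_one_of_mem _ instBEqOfDecidableEq _ _ _ (T_nodup hi h2) (mem_T hi h2 v)
  · -- support formula
    show (w.copy hend rfl : (Hgraph i 1 k).Walk (yv i 0) (yv i 0)).support = _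
    rw [SimpleGraph.Walk.support_copy, hs]
    rfl
end
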